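/- arXiv:1603.02335 — 5 statements merged into one kernel-verified Lean document; each statement's English description precedes it below -/
import Mathlib

section
/- Let q : [t₁−τ,t₂] → ℝⁿ be an admissible C² function that minimizes J^τ, i.e. J^τ[q] ≤ J^τ[q̂] for every admissible C² function q̂. Then q satisfies the Euler–Lagrange equations with time delay: (i) for all t ∈ [t₁, t₂−τ], d/dt(∂₃L[q]_τ(t) + ∂₅L[q]_τ(t+τ)) = ∂₂L[q]_τ(t) + ∂₄L[q]_τ(t+τ); and (ii) for all t ∈ [t₂−τ, t₂], d/dt ∂₃L[q]_τ(t) = ∂₂L[q]_τ(t). -/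
open Set MeasureTheory RealInnerProductSpace

noncomputable section

/-- `ℝⁿ` as a Euclidean space. -/
abbrev Vec (n : ℕ) := EuclideanSpace ℝ (Fin n)

/-- The type of Lagrangians `L(t, q, q̇, q_τ, q̇_τ)`. -/
abbrev Lag (n : ℕ) := ℝ → Vec n → Vec n → Vec n → Vec n → ℝ

/-- `∂₁L[q]_τ(t)`: partial derivative of `L` w.r.t. its first (time) argument,
evaluated along `[q]_τ(t) = (t, q(t), q̇(t), q(t-τ), q̇(t-τ))`. -/
def dL1 {n : ℕ} (L : Lag n) (τ : ℝ) (q : ℝ → Vec n) (t : ℝ) : ℝ :=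
  deriv (fun s => L s (q t) (deriv q t) (q (t - τ)) (deriv q (t - τ))) t

/-- `∂₂L[q]_τ(t)` (a gradient, i.e. a vector in `ℝⁿ`). -/
def dL2 {n : ℕ} (L : Lag n) (τ : ℝ) (q : ℝ → Vec n) (t : ℝ) : Vec n :=
  gradient (fun y => L t y (deriv q t) (q (t - τ)) (deriv q (t - τ))) (q t)

/-- `∂₃L[q]_τ(t)`. -/
def dL3 {n : ℕ} (L : Lag n) (τ : ℝ) (q : ℝ → Vec n) (t : ℝ) : Vec n :=
  gradient (fun v => L t (q t) v (q (t - τ)) (deriv q (t - τ))) (deriv q t)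

/-- `∂₄L[q]_τ(t)`. -/
def dL4 {n : ℕ} (L : Lag n) (τ : ℝ) (q : ℝ → Vec n) (t : ℝ) : Vec n :=
  gradient (fun y => L t (q t) (deriv q t) y (deriv q (t - τ))) (q (t - τ))

/-- `∂₅L[q]_τ(t)`. -/
def dL5 {n : ℕ} (L : Lag n) (τ : ℝ) (q : ℝ → Vec n) (t : ℝ) : Vec n :=
  gradient (fun v => L t (q t) (deriv q t) (q (t - τ)) v) (deriv q (t - τ))

/-- `L[q]_τ(t)`: the Lagrangian evaluated along the delayed trajectory. -/
def lagAlong {n : ℕ} (L : Lag n) (τ : ℝ) (q : ℝ → Vec n) (t : ℝ) : ℝ :=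
  L t (q t) (deriv q t) (q (t - τ)) (deriv q (t - τ))

/-- The delayed functional `J^τ[q] = ∫_{t₁}^{t₂} L[q]_τ(t) dt`. -/
def Jτ {n : ℕ} (L : Lag n) (t₁ t₂ τ : ℝ) (q : ℝ → Vec n) : ℝ :=
  ∫ t in t₁..t₂, lagAlong L τ q t

/-- `L` is `C²` in all of its arguments (jointly). -/
def LagC2 {n : ℕ} (L : Lag n) : Prop :=
  ContDiff ℝ 2 (fun p : ℝ × Vec n × Vec n × Vec n × Vec n =>
    L p.1 p.2.1 p.2.2.1 p.2.2.2.1 p.2.2.2.2)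

/-- The Euler–Lagrange equations with time delay for the Lagrangian `L`. -/
def ELdelay {n : ℕ} (L : Lag n) (t₁ t₂ τ : ℝ) (q : ℝ → Vec n) : Prop :=
  (∀ t ∈ Icc t₁ (t₂ - τ),
      deriv (fun s => dL3 L τ q s + dL5 L τ q (s + τ)) t
        = dL2 L τ q t + dL4 L τ q (t + τ)) ∧
  (∀ t ∈ Icc (t₂ - τ) t₂,
      deriv (fun s => dL3 L τ q s) t = dL2 L τ q t)

/-- Admissibility: `q` is `C²`, coincides with `δ` on `[t₁-τ, t₁]` and satisfies
`q(t₂) = q_{t₂}`. -/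
def Admissible {n : ℕ} (t₁ t₂ τ : ℝ) (δ : ℝ → Vec n) (qt2 : Vec n)
    (q : ℝ → Vec n) : Prop :=
  ContDiff ℝ 2 q ∧ (∀ t ∈ Icc (t₁ - τ) t₁, q t = δ t) ∧ q t₂ = qt2


namespace ELaux
variable {n : ℕ}
abbrev P (n : ℕ) := ℝ × Vec n × Vec n × Vec n × Vec n
/-- The uncurried Lagrangian. -/
def Fn (L : Lag n) : P n → ℝ := fun p => L p.1 p.2.1 p.2.2.1 p.2.2.2.1 p.2.2.2.2
/-- The delayed path `[q]_τ`. -/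
def pth (τ : ℝ) (q : ℝ → Vec n) (t : ℝ) : P n :=
  (t, q t, deriv q t, q (t - τ), deriv q (t - τ))

def ι2 : Vec n →L[ℝ] P n :=
  (0 : Vec n →L[ℝ] ℝ).prod ((ContinuousLinearMap.id ℝ (Vec n)).prod 0)
def ι3 : Vec n →L[ℝ] P n :=
  (0 : Vec n →L[ℝ] ℝ).prod ((0 : Vec n →L[ℝ] Vec n).prod
    ((ContinuousLinearMap.id ℝ (Vec n)).prod 0))
def ι4 : Vec n →L[ℝ] P n :=
  (0 : Vec n →L[ℝ] ℝ).prod ((0 : Vec n →L[ℝ] Vec n).prod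
    ((0 : Vec n →L[ℝ] Vec n).prod ((ContinuousLinearMap.id ℝ (Vec n)).prod 0)))
def ι5 : Vec n →L[ℝ] P n :=
  (0 : Vec n →L[ℝ] ℝ).prod ((0 : Vec n →L[ℝ] Vec n).prod
    ((0 : Vec n →L[ℝ] Vec n).prod ((0 : Vec n →L[ℝ] Vec n).prod
      (ContinuousLinearMap.id ℝ (Vec n)))))

lemma ι2_apply (x : Vec n) : (ι2 x : P n) = (0, x, 0, 0, 0) := rfl
lemma ι3_apply (x : Vec n) : (ι3 x : P n) = (0, 0, x, 0, 0) := rfl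
lemma ι4_apply (x : Vec n) : (ι4 x : P n) = (0, 0, 0, x, 0) := rfl
lemma ι5_apply (x : Vec n) : (ι5 x : P n) = (0, 0, 0, 0, x) := rfl

lemma decomp (a b c d : Vec n) :
    ((0, a, b, c, d) : P n) = ι2 a + ι3 b + ι4 c + ι5 d := by
  simp [ι2_apply, ι3_apply, ι4_apply, ι5_apply, Prod.ext_iff]

lemma pth_contDiff {τ : ℝ} {q : ℝ → Vec n} (hq : ContDiff ℝ 2 q) :
    ContDiff ℝ 1 (pth τ q) := by
  have hq' : ContDiff ℝ (1 + 1) q := by norm_num; exact hq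
  have hd : ContDiff ℝ 1 (deriv q) := (contDiff_succ_iff_deriv.mp hq').2.2
  have hq1 : ContDiff ℝ 1 q := hq.of_le (by norm_num)
  have hshift : ContDiff ℝ 1 (fun t : ℝ => t - τ) :=
    (contDiff_id.sub contDiff_const)
  exact contDiff_id.prodMk (hq1.prodMk (hd.prodMk ((hq1.comp hshift).prodMk (hd.comp hshift))))

def dual (L : Lag n) (ι : Vec n →L[ℝ] P n) (p : P n) : Vec n :=
  (InnerProductSpace.toDual ℝ (Vec n)).symm ((fderiv ℝ (Fn L) p).comp ι)

lemma hL_Fn {L : Lag n} (hL : LagC2 L) : ContDiff ℝ 2 (Fn L) := hL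

lemma inner_dual {L : Lag n} (ι : Vec n →L[ℝ] P n) (p : P n) (a : Vec n) :
    ⟪dual L ι p, a⟫ = fderiv ℝ (Fn L) p (ι a) := by
  rw [dual, InnerProductSpace.toDual_symm_apply]; rfl

lemma grad_partial {L : Lag n} (hL : LagC2 L) (ι : Vec n →L[ℝ] P n)
    (c : P n) (x : Vec n) (g : Vec n → ℝ)
    (hg : ∀ y, g y = Fn L (c + ι y)) :
    gradient g x = dual L ι (c + ι x) := by
  have hA : HasFDerivAt (fun y : Vec n => c + ι y) (ι : Vec n →L[ℝ] P n) x :=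
    (ι.hasFDerivAt).const_add c
  have hF : HasFDerivAt (Fn L) (fderiv ℝ (Fn L) (c + ι x)) (c + ι x) :=
    ((hL_Fn hL).differentiable (by norm_num)).differentiableAt.hasFDerivAt
  have hcomp : HasFDerivAt g ((fderiv ℝ (Fn L) (c + ι x)).comp ι) x := by
    have := hF.comp x hA
    have hgf : g = Fn L ∘ fun y => c + ι y := funext hg
    rw [hgf]; exact this
  rw [gradient, hcomp.fderiv]; rfl

lemma contDiff_dual {L : Lag n} (hL : LagC2 L) (ι : Vec n →L[ℝ] P n)
    {c : ℝ → P n} (hc : ContDiff ℝ 1 c) :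
    ContDiff ℝ 1 (fun t => dual L ι (c t)) := by
  have hfd : ContDiff ℝ 1 (fderiv ℝ (Fn L)) :=
    (hL_Fn hL).fderiv_right (by norm_num)
  have h1 : ContDiff ℝ 1 (fun t => fderiv ℝ (Fn L) (c t)) := hfd.comp hc
  have h2 : ContDiff ℝ 1 (fun t => (fderiv ℝ (Fn L) (c t)).comp ι) :=
    h1.clm_comp contDiff_const
  have h3 := (((InnerProductSpace.toDual ℝ
      (Vec n)).symm.toContinuousLinearEquiv.toContinuousLinearMap).contDiff).comp h2
  convert h3 using 1
  funext t; rfl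

lemma dL2_eq {L : Lag n} (hL : LagC2 L) (τ : ℝ) (q : ℝ → Vec n) (t : ℝ) :
    dL2 L τ q t = dual L ι2 (pth τ q t) := by
  have h := grad_partial hL ι2 ((t, 0, deriv q t, q (t - τ), deriv q (t - τ)) : P n)
    (q t) (fun y => L t y (deriv q t) (q (t - τ)) (deriv q (t - τ)))
    (fun y => by simp [Fn, ι2_apply, Prod.mk_add_mk])
  rw [dL2, h]
  congr 1
  simp [ι2_apply, Prod.mk_add_mk, pth]

lemma dL3_eq {L : Lag n} (hL : LagC2 L) (τ : ℝ) (q : ℝ → Vec n) (t : ℝ) :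
    dL3 L τ q t = dual L ι3 (pth τ q t) := by
  have h := grad_partial hL ι3 ((t, q t, 0, q (t - τ), deriv q (t - τ)) : P n)
    (deriv q t) (fun v => L t (q t) v (q (t - τ)) (deriv q (t - τ)))
    (fun v => by simp [Fn, ι3_apply, Prod.mk_add_mk])
  rw [dL3, h]
  congr 1
  simp [ι3_apply, Prod.mk_add_mk, pth]

lemma dL4_eq {L : Lag n} (hL : LagC2 L) (τ : ℝ) (q : ℝ → Vec n) (t : ℝ) :
    dL4 L τ q t = dual L ι4 (pth τ q t) := by
  have h := grad_partial hL ι4 ((t, q t, deriv q t, 0, deriv q (t - τ)) : P n)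
    (q (t - τ)) (fun y => L t (q t) (deriv q t) y (deriv q (t - τ)))
    (fun y => by simp [Fn, ι4_apply, Prod.mk_add_mk])
  rw [dL4, h]
  congr 1
  simp [ι4_apply, Prod.mk_add_mk, pth]

lemma dL5_eq {L : Lag n} (hL : LagC2 L) (τ : ℝ) (q : ℝ → Vec n) (t : ℝ) :
    dL5 L τ q t = dual L ι5 (pth τ q t) := by
  have h := grad_partial hL ι5 ((t, q t, deriv q t, q (t - τ), 0) : P n)
    (deriv q (t - τ)) (fun v => L t (q t) (deriv q t) (q (t - τ)) v)
    (fun v => by simp [Fn, ι5_apply, Prod.mk_add_mk])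
  rw [dL5, h]
  congr 1
  simp [ι5_apply, Prod.mk_add_mk, pth]

def dir (τ : ℝ) (η : ℝ → Vec n) (t : ℝ) : P n :=
  (0, η t, deriv η t, η (t - τ), deriv η (t - τ))

lemma deriv_add_smul {q η : ℝ → Vec n} (hq : ContDiff ℝ 2 q) (hη : ContDiff ℝ 2 η)
    (ε t : ℝ) : deriv (fun s => q s + ε • η s) t = deriv q t + ε • deriv η t := by
  have h1 : HasDerivAt q (deriv q t) t :=
    ((hq.differentiable (by norm_num)) t).hasDerivAt
  have h2 : HasDerivAt η (deriv η t) t :=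
    ((hη.differentiable (by norm_num)) t).hasDerivAt
  exact (h1.add (h2.const_smul ε)).deriv

lemma pth_add {τ : ℝ} {q η : ℝ → Vec n} (hq : ContDiff ℝ 2 q) (hη : ContDiff ℝ 2 η)
    (ε t : ℝ) :
    pth τ (fun s => q s + ε • η s) t = pth τ q t + ε • dir τ η t := by
  simp [pth, dir, deriv_add_smul hq hη, Prod.ext_iff, Prod.smul_mk, Prod.mk_add_mk]

lemma dir_contDiff {τ : ℝ} {η : ℝ → Vec n} (hη : ContDiff ℝ 2 η) :
    ContDiff ℝ 1 (dir τ η) := by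
  have hη' : ContDiff ℝ (1 + 1) η := by norm_num; exact hη
  have hd : ContDiff ℝ 1 (deriv η) := (contDiff_succ_iff_deriv.mp hη').2.2
  have hη1 : ContDiff ℝ 1 η := hη.of_le (by norm_num)
  have hshift : ContDiff ℝ 1 (fun t : ℝ => t - τ) := (contDiff_id.sub contDiff_const)
  exact contDiff_const.prodMk (hη1.prodMk (hd.prodMk ((hη1.comp hshift).prodMk (hd.comp hshift))))

lemma lagAlong_add {L : Lag n} {τ : ℝ} {q η : ℝ → Vec n}
    (hq : ContDiff ℝ 2 q) (hη : ContDiff ℝ 2 η) (ε t : ℝ) :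
    lagAlong L τ (fun s => q s + ε • η s) t = Fn L (pth τ q t + ε • dir τ η t) := by
  rw [← pth_add hq hη]; rfl

lemma integrand_eq {L : Lag n} (hL : LagC2 L) {τ : ℝ} (q η : ℝ → Vec n) (t : ℝ) :
    fderiv ℝ (Fn L) (pth τ q t) (dir τ η t)
      = ⟪dL2 L τ q t, η t⟫ + ⟪dL3 L τ q t, deriv η t⟫
        + ⟪dL4 L τ q t, η (t - τ)⟫ + ⟪dL5 L τ q t, deriv η (t - τ)⟫ := by
  rw [dL2_eq hL, dL3_eq hL, dL4_eq hL, dL5_eq hL, inner_dual, inner_dual,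
    inner_dual, inner_dual, ← map_add, ← map_add, ← map_add, ← decomp]
  rfl

lemma first_variation {L : Lag n} (hL : LagC2 L) {τ t₁ t₂ : ℝ} {q η : ℝ → Vec n}
    (hq : ContDiff ℝ 2 q) (hη : ContDiff ℝ 2 η) :
    HasDerivAt (fun ε : ℝ => Jτ L t₁ t₂ τ (fun s => q s + ε • η s))
      (∫ t in t₁..t₂, fderiv ℝ (Fn L) (pth τ q t) (dir τ η t)) (0 : ℝ) := by
  set F : ℝ → ℝ → ℝ := fun ε t => Fn L (pth τ q t + ε • dir τ η t) with hF
  set F' : ℝ → ℝ → ℝ :=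
    fun ε t => fderiv ℝ (Fn L) (pth τ q t + ε • dir τ η t) (dir τ η t) with hF'
  have hFncont : Continuous (Fn L) := (hL_Fn hL).continuous
  have hfdcont : Continuous (fderiv ℝ (Fn L)) :=
    ((hL_Fn hL).fderiv_right (m := 1) (by norm_num)).continuous
  have hpthc : Continuous (pth τ q) := (pth_contDiff hq).continuous
  have hdirc : Continuous (dir τ η) := (dir_contDiff hη).continuous
  have hinner : Continuous (fun z : ℝ × ℝ => pth τ q z.2 + z.1 • dir τ η z.2) :=
    (hpthc.comp continuous_snd).add
      (continuous_fst.smul (hdirc.comp continuous_snd))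
  have hg : Continuous (fun z : ℝ × ℝ => F' z.1 z.2) := by
    exact (hfdcont.comp hinner).clm_apply (hdirc.comp continuous_snd)
  obtain ⟨C, hC⟩ := (isCompact_Icc.prod isCompact_uIcc :
      IsCompact ((Icc (-1 : ℝ) 1) ×ˢ (uIcc t₁ t₂))).exists_bound_of_continuousOn
    (hg.norm.continuousOn)
  have hdiff : ∀ (ε t : ℝ), HasDerivAt (fun x => F x t) (F' ε t) ε := by
    intro ε t
    have hA : HasDerivAt (fun x : ℝ => pth τ q t + x • dir τ η t) (dir τ η t) ε := by
      have := ((hasDerivAt_id ε).smul_const (dir τ η t)).const_add (pth τ q t)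
      simpa using this
    have hFd : HasFDerivAt (Fn L)
        (fderiv ℝ (Fn L) (pth τ q t + ε • dir τ η t)) (pth τ q t + ε • dir τ η t) :=
      ((hL_Fn hL).differentiable (by norm_num)).differentiableAt.hasFDerivAt
    exact hFd.comp_hasDerivAt ε hA
  have key := intervalIntegral.hasDerivAt_integral_of_dominated_loc_of_deriv_le
    (F := F) (F' := F') (x₀ := (0 : ℝ)) (a := t₁) (b := t₂) (μ := volume)
    (bound := fun _ => C) (Metric.ball_mem_nhds (0 : ℝ) one_pos)
    (Filter.Eventually.of_forall (fun ε =>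
      ((hFncont.comp (hinner.comp (Continuous.prodMk_right ε))).aestronglyMeasurable)))
    (((hFncont.comp (hinner.comp (Continuous.prodMk_right (0 : ℝ)))).continuousOn).intervalIntegrable)
    ((hg.comp (Continuous.prodMk_right (0 : ℝ))).aestronglyMeasurable)
    (Filter.Eventually.of_forall (fun t ht ε hε => by
      have : (ε, t) ∈ (Icc (-1 : ℝ) 1) ×ˢ (uIcc t₁ t₂) := by
        constructor
        · have := mem_ball_zero_iff.mp hε
          have h1 : |ε| ≤ 1 := le_of_lt (by simpa [Real.norm_eq_abs] using this)
          exact abs_le.mp h1 |>.imp id id |> fun h => ⟨h.1, h.2⟩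
        · exact uIoc_subset_uIcc ht
      have := hC _ this
      calc ‖F' ε t‖ ≤ ‖‖F' ε t‖‖ := by simp
      _ ≤ C := this))
    (intervalIntegrable_const)
    (Filter.Eventually.of_forall (fun t ht ε hε => hdiff ε t))
  have h2 := key.2
  have hsimp : (∫ t in t₁..t₂, F' 0 t) =
      ∫ t in t₁..t₂, fderiv ℝ (Fn L) (pth τ q t) (dir τ η t) := by
    congr 1; funext t; simp [hF']
  rw [hsimp] at h2
  have hJ : (fun ε => Jτ L t₁ t₂ τ (fun s => q s + ε • η s))
      = fun ε => ∫ t in t₁..t₂, F ε t := by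
    funext ε
    unfold Jτ
    congr 1; funext t; exact lagAlong_add hq hη ε t
  rw [hJ]
  exact h2

lemma shrink {f : ℝ → ℝ} (hf : Continuous f) {a b c d : ℝ}
    (hac : a ≤ c) (hcd : c ≤ d) (hdb : d ≤ b)
    (h0 : ∀ t, t ∉ Ioo c d → f t = 0) :
    ∫ t in a..b, f t = ∫ t in c..d, f t := by
  have hint : ∀ u v : ℝ, IntervalIntegrable f volume u v :=
    fun u v => hf.intervalIntegrable u v
  have h1 : (∫ t in a..c, f t) = 0 := by
    rw [← intervalIntegral.integral_zero (a := a) (b := c) (μ := volume)]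
    apply intervalIntegral.integral_congr
    intro t ht
    rw [uIcc_of_le hac] at ht
    exact h0 t (fun hmem => absurd ht.2 (not_le.mpr (lt_of_lt_of_le hmem.1 le_rfl)))
  have h2 : (∫ t in d..b, f t) = 0 := by
    rw [← intervalIntegral.integral_zero (a := d) (b := b) (μ := volume)]
    apply intervalIntegral.integral_congr
    intro t ht
    rw [uIcc_of_le hdb] at ht
    exact h0 t (fun hmem => absurd ht.1 (not_le.mpr hmem.2))
  have e1 : (∫ t in a..c, f t) + (∫ t in c..b, f t) = ∫ t in a..b, f t :=
    intervalIntegral.integral_add_adjacent_intervals (hint a c) (hint c b)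
  have e2 : (∫ t in c..d, f t) + (∫ t in d..b, f t) = ∫ t in c..b, f t :=
    intervalIntegral.integral_add_adjacent_intervals (hint c d) (hint d b)
  linarith

lemma eliminate {G R : ℝ → Vec n} (hG : ContDiff ℝ 1 G) (hR : Continuous R) {a b : ℝ}
    (key : ∀ t₀ ∈ Ioo a b, ∀ (v : Vec n) (φ : ContDiffBump t₀), ∀ c d : ℝ,
      Icc c d ⊆ Ioo a b → Metric.closedBall t₀ φ.rOut ⊆ Ioo c d →
      (∫ t in c..d, ((φ : ℝ → ℝ) t * ⟪R t, v⟫ + deriv (φ : ℝ → ℝ) t * ⟪G t, v⟫)) = 0) :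
    ∀ t₀ ∈ Ioo a b, deriv G t₀ = R t₀ := by
  have hG' : Continuous (deriv G) := hG.continuous_deriv le_rfl
  have hGdiff : Differentiable ℝ G := hG.differentiable one_ne_zero
  intro t₀ ht₀
  by_contra hne
  set v : Vec n := deriv G t₀ - R t₀ with hv
  have hvne : v ≠ 0 := sub_ne_zero.mpr hne
  set m : ℝ := ‖v‖ ^ 2 / 2 with hm
  have hmpos : 0 < m := by
    have := norm_pos_iff.mpr hvne
    rw [hm]; positivity
  have hEcont : Continuous (fun t => ⟪deriv G t - R t, v⟫) :=
    (hG'.sub hR).inner continuous_const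
  have hUopen : IsOpen ({t | m < ⟪deriv G t - R t, v⟫} ∩ Ioo a b) :=
    (isOpen_lt continuous_const hEcont).inter isOpen_Ioo
  have ht₀U : t₀ ∈ {t | m < ⟪deriv G t - R t, v⟫} ∩ Ioo a b := by
    refine ⟨?_, ht₀⟩
    show m < ⟪v, v⟫
    rw [real_inner_self_eq_norm_sq]
    rw [hm]; nlinarith [sq_nonneg ‖v‖, norm_pos_iff.mpr hvne, sq_abs ‖v‖,
      mul_pos (norm_pos_iff.mpr hvne) (norm_pos_iff.mpr hvne)]
  obtain ⟨r, hrpos, hball⟩ := Metric.isOpen_iff.mp hUopen t₀ ht₀U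
  set φ : ContDiffBump t₀ := ⟨r/4, r/2, by positivity, by linarith⟩ with hφ
  set c : ℝ := t₀ - 3/4 * r with hc
  set d : ℝ := t₀ + 3/4 * r with hd
  have hIccball : Icc c d ⊆ Metric.ball t₀ r := by
    intro t ht
    rw [Metric.mem_ball, Real.dist_eq, abs_lt]
    constructor <;> [skip; skip] <;>
      · simp only [hc, hd] at ht
        have h1 := ht.1; have h2 := ht.2; linarith
  have hIcc : Icc c d ⊆ Ioo a b := fun t ht => (hball (hIccball ht)).2
  have hcb : Metric.closedBall t₀ φ.rOut ⊆ Ioo c d := by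
    intro t ht
    rw [Metric.mem_closedBall, Real.dist_eq] at ht
    have : |t - t₀| ≤ r/2 := ht
    have := abs_le.mp this
    constructor <;> simp only [hc, hd] <;> linarith [this.1, this.2]
  have h0 := key t₀ ht₀ v φ c d hIcc hcb
  -- integration by parts
  have hφd : ∀ t : ℝ, HasDerivAt (φ : ℝ → ℝ) (deriv (φ : ℝ → ℝ) t) t :=
    fun t => ((φ.contDiff (n := 1)).differentiable (by norm_num) t).hasDerivAt
  have hwd : ∀ t : ℝ, HasDerivAt (fun t => ⟪G t, v⟫) (⟪deriv G t, v⟫) t := by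
    intro t
    have := HasDerivAt.inner ℝ ((hGdiff t).hasDerivAt) (hasDerivAt_const t v)
    simpa using this
  have hφcont : Continuous (φ : ℝ → ℝ) := φ.continuous
  have hφ'cont : Continuous (deriv (φ : ℝ → ℝ)) :=
    (φ.contDiff (n := 2)).continuous_deriv (by norm_num)
  have hwcont : Continuous (fun t => ⟪G t, v⟫) := hG.continuous.inner continuous_const
  have hw'cont : Continuous (fun t => ⟪deriv G t, v⟫) := hG'.inner continuous_const
  have hibp := intervalIntegral.integral_deriv_mul_eq_sub
    (u := (φ : ℝ → ℝ)) (v := fun t => ⟪G t, v⟫)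
    (u' := deriv (φ : ℝ → ℝ)) (v' := fun t => ⟪deriv G t, v⟫)
    (a := c) (b := d)
    (fun x _ => hφd x) (fun x _ => hwd x)
    (hφ'cont.intervalIntegrable c d) (hw'cont.intervalIntegrable c d)
  have hφc : (φ : ℝ → ℝ) c = 0 := φ.zero_of_le_dist (by
    rw [Real.dist_eq]; simp only [hc]
    rw [abs_of_nonpos (by linarith)]
    show r/2 ≤ -(t₀ - 3/4*r - t₀); linarith)
  have hφdd : (φ : ℝ → ℝ) d = 0 := φ.zero_of_le_dist (by
    rw [Real.dist_eq]; simp only [hd]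
    rw [abs_of_nonneg (by linarith)]
    show r/2 ≤ t₀ + 3/4*r - t₀; linarith)
  rw [hφc, hφdd, zero_mul, zero_mul, sub_zero] at hibp
  -- combine
  have hsplit1 : (∫ t in c..d, ((φ : ℝ → ℝ) t * ⟪R t, v⟫ + deriv (φ : ℝ → ℝ) t * ⟪G t, v⟫))
      - (∫ t in c..d, (deriv (φ : ℝ → ℝ) t * ⟪G t, v⟫ + (φ : ℝ → ℝ) t * ⟪deriv G t, v⟫))
      = ∫ t in c..d, (φ : ℝ → ℝ) t * ⟪R t - deriv G t, v⟫ := by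
    rw [← intervalIntegral.integral_sub]
    · apply intervalIntegral.integral_congr
      intro t _
      simp only [inner_sub_left]
      ring
    · exact ((hφcont.mul (hR.inner continuous_const)).add
        (hφ'cont.mul hwcont)).intervalIntegrable c d
    · exact ((hφ'cont.mul hwcont).add (hφcont.mul hw'cont)).intervalIntegrable c d
  rw [h0, hibp, zero_sub] at hsplit1
  -- positivity
  have hpos : 0 < ∫ t in c..d, (φ : ℝ → ℝ) t * ⟪deriv G t - R t, v⟫ := by
    have hcd : c < d := by simp only [hc, hd]; linarith
    apply intervalIntegral.integral_pos hcd
    · exact ((hφcont.mul hEcont).continuousOn)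
    · intro x hx
      have hxIcc : x ∈ Icc c d := Ioc_subset_Icc_self hx
      have hxU := hball (hIccball hxIcc)
      have h1 : m < ⟪deriv G x - R x, v⟫ := hxU.1
      exact mul_nonneg φ.nonneg (le_of_lt (lt_trans hmpos h1))
    · refine ⟨t₀, ?_, ?_⟩
      · constructor <;> simp only [hc, hd] <;> linarith
      · have h1 : (φ : ℝ → ℝ) t₀ = 1 := φ.one_of_mem_closedBall (by
          rw [Metric.mem_closedBall, dist_self]; positivity)
        rw [h1, one_mul]
        have := ht₀U.1
        exact lt_trans hmpos this
  have : (∫ t in c..d, (φ : ℝ → ℝ) t * ⟪deriv G t - R t, v⟫)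
      = - ∫ t in c..d, (φ : ℝ → ℝ) t * ⟪R t - deriv G t, v⟫ := by
    rw [← intervalIntegral.integral_neg]
    apply intervalIntegral.integral_congr
    intro t _
    simp only [inner_sub_left]
    ring
  rw [this, ← hsplit1] at hpos
  simp at hpos

lemma extend {E : ℝ → Vec n} (hE : Continuous E) {a b : ℝ} (hab : a < b)
    (h : ∀ t ∈ Ioo a b, E t = 0) : ∀ t ∈ Icc a b, E t = 0 := by
  have hclosed : IsClosed {t | E t = 0} := isClosed_eq hE continuous_const
  have hsub : closure (Ioo a b) ⊆ {t | E t = 0} :=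
    closure_minimal (fun t ht => h t ht) hclosed
  intro t ht
  exact hsub (by rwa [closure_Ioo hab.ne])

end ELaux

/-- a `C²` minimizer of the delayed functional `J^τ` satisfies the
Euler–Lagrange equations with time delay. -/
theorem euler_lagrange_with_time_delay
    {n : ℕ} (hn : 0 < n) (t₁ t₂ τ : ℝ) (ht : t₁ < t₂) (hτ : 0 < τ)
    (hτ' : τ < t₂ - t₁) (L : Lag n) (hL : LagC2 L)
    (δ : ℝ → Vec n) (qt2 : Vec n) (q : ℝ → Vec n)
    (hq : Admissible t₁ t₂ τ δ qt2 q)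
    (hmin : ∀ q' : ℝ → Vec n, Admissible t₁ t₂ τ δ qt2 q' →
      Jτ L t₁ t₂ τ q ≤ Jτ L t₁ t₂ τ q') :
    ELdelay L t₁ t₂ τ q := by
  obtain ⟨hq2, hqδ, hqt2⟩ := hq
  have ht₂τ : t₁ < t₂ - τ := by linarith
  have hτt₂ : t₂ - τ < t₂ := by linarith
  -- regularity facts
  have hpthC : ContDiff ℝ 1 (ELaux.pth τ q) := ELaux.pth_contDiff hq2
  have hshiftC : ContDiff ℝ 1 (fun s : ℝ => ELaux.pth τ q (s + τ)) :=
    hpthC.comp (contDiff_id.add contDiff_const)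
  have hd2 : Continuous (dL2 L τ q) := by
    have h := (ELaux.contDiff_dual hL ELaux.ι2 hpthC).continuous
    have e : dL2 L τ q = fun t => ELaux.dual L ELaux.ι2 (ELaux.pth τ q t) :=
      funext (ELaux.dL2_eq hL τ q)
    rw [e]; exact h
  have hd3C : ContDiff ℝ 1 (dL3 L τ q) := by
    have h := ELaux.contDiff_dual hL ELaux.ι3 hpthC
    have e : dL3 L τ q = fun t => ELaux.dual L ELaux.ι3 (ELaux.pth τ q t) :=
      funext (ELaux.dL3_eq hL τ q)
    rw [e]; exact h
  have hd4τ : Continuous (fun t => dL4 L τ q (t + τ)) := by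
    have h := (ELaux.contDiff_dual hL ELaux.ι4 hshiftC).continuous
    have e : (fun t => dL4 L τ q (t + τ))
        = fun t => ELaux.dual L ELaux.ι4 (ELaux.pth τ q (t + τ)) :=
      funext (fun t => ELaux.dL4_eq hL τ q (t + τ))
    rw [e]; exact h
  have hd5τC : ContDiff ℝ 1 (fun t => dL5 L τ q (t + τ)) := by
    have h := ELaux.contDiff_dual hL ELaux.ι5 hshiftC
    have e : (fun t => dL5 L τ q (t + τ))
        = fun t => ELaux.dual L ELaux.ι5 (ELaux.pth τ q (t + τ)) :=
      funext (fun t => ELaux.dL5_eq hL τ q (t + τ))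
    rw [e]; exact h
  set G₁ : ℝ → Vec n := fun s => dL3 L τ q s + dL5 L τ q (s + τ) with hG₁def
  set R₁ : ℝ → Vec n := fun t => dL2 L τ q t + dL4 L τ q (t + τ) with hR₁def
  set G₂ : ℝ → Vec n := fun s => dL3 L τ q s with hG₂def
  set R₂ : ℝ → Vec n := fun t => dL2 L τ q t with hR₂def
  have hG₁C : ContDiff ℝ 1 G₁ := hd3C.add hd5τC
  have hR₁C : Continuous R₁ := hd2.add hd4τ
  have hG₂C : ContDiff ℝ 1 G₂ := hd3C
  have hR₂C : Continuous R₂ := hd2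
  -- the vanishing of the first variation for admissible directions
  have varzero : ∀ η : ℝ → Vec n, ContDiff ℝ 2 η →
      (∀ t, t ≤ t₁ → η t = 0) → η t₂ = 0 →
      (∫ t in t₁..t₂, fderiv ℝ (ELaux.Fn L) (ELaux.pth τ q t) (ELaux.dir τ η t)) = 0 := by
    intro η hη hle h2
    set Φ : ℝ → ℝ := fun ε : ℝ => Jτ L t₁ t₂ τ (fun s => q s + ε • η s) with hΦdef
    have hadm : ∀ ε : ℝ, Admissible t₁ t₂ τ δ qt2 (fun s => q s + ε • η s) := by
      intro ε
      refine ⟨hq2.add (hη.const_smul ε), ?_, ?_⟩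
      · intro t ht
        show q t + ε • η t = δ t
        rw [hle t ht.2, smul_zero, add_zero]
        exact hqδ t ht
      · show q t₂ + ε • η t₂ = qt2
        rw [h2, smul_zero, add_zero]; exact hqt2
    have hΦ0 : Φ 0 = Jτ L t₁ t₂ τ q := by
      have e : (fun s => q s + (0 : ℝ) • η s) = q := by
        funext s; rw [zero_smul, add_zero]
      rw [hΦdef]; simp only [e]
    have hlocal : IsLocalMin Φ 0 := Filter.Eventually.of_forall (fun ε => by
      rw [hΦ0]; exact hmin _ (hadm ε))
    have hderiv := ELaux.first_variation (τ := τ) (t₁ := t₁) (t₂ := t₂) hL hq2 hη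
    exact hlocal.hasDerivAt_eq_zero hderiv
  -- the common branch machinery
  have branch : ∀ a b : ℝ, t₁ ≤ a → b ≤ t₂ - τ ∨ (t₂ - τ ≤ a ∧ b ≤ t₂) →
      True := fun _ _ _ _ => trivial
  clear branch
  constructor
  · -- first branch : on [t₁, t₂ - τ]
    have key₁ : ∀ t₀ ∈ Ioo t₁ (t₂ - τ), ∀ (v : Vec n) (φ : ContDiffBump t₀), ∀ c d : ℝ,
        Icc c d ⊆ Ioo t₁ (t₂ - τ) → Metric.closedBall t₀ φ.rOut ⊆ Ioo c d →
        (∫ t in c..d, ((φ : ℝ → ℝ) t * ⟪R₁ t, v⟫ + deriv (φ : ℝ → ℝ) t * ⟪G₁ t, v⟫)) = 0 := by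
      intro t₀ ht₀ v φ c d hIcc hcb
      have hcd : c < d := by
        have h := hcb (Metric.mem_closedBall_self (le_of_lt φ.rOut_pos))
        exact lt_trans h.1 h.2
      have hc1 : t₁ < c := (hIcc ⟨le_refl c, le_of_lt hcd⟩).1
      have hd1 : d < t₂ - τ := (hIcc ⟨le_of_lt hcd, le_refl d⟩).2
      set η : ℝ → Vec n := fun t => (φ : ℝ → ℝ) t • v with hηdef
      have hη : ContDiff ℝ 2 η := (φ.contDiff (n := 2)).smul contDiff_const
      have hφd : ∀ t : ℝ, HasDerivAt (φ : ℝ → ℝ) (deriv (φ : ℝ → ℝ) t) t :=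
        fun t => ((φ.contDiff (n := 1)).differentiable (by norm_num) t).hasDerivAt
      have hηd : ∀ t, deriv η t = deriv (φ : ℝ → ℝ) t • v :=
        fun t => ((hφd t).smul_const v).deriv
      have hηzero : ∀ t, t ∉ Ioo c d → η t = 0 ∧ deriv η t = 0 := by
        intro t ht
        have hout : t ∉ Metric.closedBall t₀ φ.rOut := fun hmem => ht (hcb hmem)
        have hdist : φ.rOut ≤ dist t t₀ :=
          le_of_lt (not_le.mp (fun hle => hout (Metric.mem_closedBall.mpr hle)))
        constructor
        · rw [hηdef]; simp only [φ.zero_of_le_dist hdist, zero_smul]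
        · rw [hηd t]
          have htsupp : t ∉ tsupport (φ : ℝ → ℝ) := by
            rw [φ.tsupport_eq]; exact hout
          rw [Function.notMem_support.mp (fun hs => htsupp (support_deriv_subset hs)),
            zero_smul]
      have hvz := varzero η hη
        (fun t htle => (hηzero t (fun hmem => absurd (lt_of_lt_of_le hmem.1 htle)
          (not_lt.mpr (le_of_lt hc1)))).1)
        ((hηzero t₂ (fun hmem => absurd hmem.2 (not_lt.mpr (by linarith)))).1)
      -- rewrite the integrand
      have hηc : Continuous η := hη.continuous
      have hη'c : Continuous (deriv η) := by
        have e : deriv η = fun t => deriv (φ : ℝ → ℝ) t • v := funext hηd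
        rw [e]
        exact ((φ.contDiff (n := 2)).continuous_deriv (by norm_num)).smul continuous_const
      set A : ℝ → ℝ := fun t => ⟪dL2 L τ q t, η t⟫ + ⟪dL3 L τ q t, deriv η t⟫ with hAdef
      set f : ℝ → ℝ :=
        fun s => ⟪dL4 L τ q (s + τ), η s⟫ + ⟪dL5 L τ q (s + τ), deriv η s⟫ with hfdef
      have hAc : Continuous A := (hd2.inner hηc).add (hd3C.continuous.inner hη'c)
      have hfc : Continuous f := (hd4τ.inner hηc).add (hd5τC.continuous.inner hη'c)
      have step1 : (∫ t in t₁..t₂, fderiv ℝ (ELaux.Fn L) (ELaux.pth τ q t) (ELaux.dir τ η t))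
          = ∫ t in t₁..t₂, (A t + f (t - τ)) := by
        apply intervalIntegral.integral_congr
        intro t _
        show fderiv ℝ (ELaux.Fn L) (ELaux.pth τ q t) (ELaux.dir τ η t) = A t + f (t - τ)
        rw [ELaux.integrand_eq hL q η t]
        simp only [hAdef, hfdef, sub_add_cancel]
        ring
      have step2 : (∫ t in t₁..t₂, (A t + f (t - τ)))
          = (∫ t in t₁..t₂, A t) + ∫ t in t₁..t₂, f (t - τ) :=
        intervalIntegral.integral_add (hAc.intervalIntegrable _ _)
          ((hfc.comp (continuous_id.sub continuous_const)).intervalIntegrable _ _)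
      have step3 : (∫ t in t₁..t₂, f (t - τ)) = ∫ s in (t₁ - τ)..(t₂ - τ), f s :=
        intervalIntegral.integral_comp_sub_right f τ
      have step4 : (∫ t in t₁..t₂, A t) = ∫ t in c..d, A t := by
        apply ELaux.shrink hAc (le_of_lt hc1) (le_of_lt hcd) (by linarith)
        intro t ht
        rw [hAdef]
        obtain ⟨h1, h2⟩ := hηzero t ht
        simp only [h1, h2, inner_zero_right, add_zero]
      have step5 : (∫ s in (t₁ - τ)..(t₂ - τ), f s) = ∫ s in c..d, f s := by
        apply ELaux.shrink hfc (by linarith) (le_of_lt hcd) (by linarith)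
        intro s hs
        rw [hfdef]
        obtain ⟨h1, h2⟩ := hηzero s hs
        simp only [h1, h2, inner_zero_right, add_zero]
      have step6 : (∫ t in c..d, A t) + (∫ s in c..d, f s)
          = ∫ t in c..d, (A t + f t) :=
        (intervalIntegral.integral_add (hAc.intervalIntegrable _ _)
          (hfc.intervalIntegrable _ _)).symm
      have step7 : (∫ t in c..d, (A t + f t))
          = ∫ t in c..d, ((φ : ℝ → ℝ) t * ⟪R₁ t, v⟫ + deriv (φ : ℝ → ℝ) t * ⟪G₁ t, v⟫) := by
        apply intervalIntegral.integral_congr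
        intro t _
        simp only [hAdef, hfdef, hηdef, hηd t, ((hφd t).smul_const v).deriv, hR₁def, hG₁def, inner_add_left,
          real_inner_smul_right]
        ring
      rw [step1, step2, step3, step4, step5, step6, step7] at hvz
      exact hvz
    have hIoo := ELaux.eliminate hG₁C hR₁C key₁
    have hext := ELaux.extend (E := fun t => deriv G₁ t - R₁ t)
      ((hG₁C.continuous_deriv le_rfl).sub hR₁C) ht₂τ
      (fun t ht => sub_eq_zero.mpr (hIoo t ht))
    intro t ht
    have := sub_eq_zero.mp (hext t ht)
    exact this
  · -- second branch : on [t₂ - τ, t₂]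
    have key₂ : ∀ t₀ ∈ Ioo (t₂ - τ) t₂, ∀ (v : Vec n) (φ : ContDiffBump t₀), ∀ c d : ℝ,
        Icc c d ⊆ Ioo (t₂ - τ) t₂ → Metric.closedBall t₀ φ.rOut ⊆ Ioo c d →
        (∫ t in c..d, ((φ : ℝ → ℝ) t * ⟪R₂ t, v⟫ + deriv (φ : ℝ → ℝ) t * ⟪G₂ t, v⟫)) = 0 := by
      intro t₀ ht₀ v φ c d hIcc hcb
      have hcd : c < d := by
        have h := hcb (Metric.mem_closedBall_self (le_of_lt φ.rOut_pos))
        exact lt_trans h.1 h.2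
      have hc1 : t₂ - τ < c := (hIcc ⟨le_refl c, le_of_lt hcd⟩).1
      have hd1 : d < t₂ := (hIcc ⟨le_of_lt hcd, le_refl d⟩).2
      set η : ℝ → Vec n := fun t => (φ : ℝ → ℝ) t • v with hηdef
      have hη : ContDiff ℝ 2 η := (φ.contDiff (n := 2)).smul contDiff_const
      have hφd : ∀ t : ℝ, HasDerivAt (φ : ℝ → ℝ) (deriv (φ : ℝ → ℝ) t) t :=
        fun t => ((φ.contDiff (n := 1)).differentiable (by norm_num) t).hasDerivAt
      have hηd : ∀ t, deriv η t = deriv (φ : ℝ → ℝ) t • v :=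
        fun t => ((hφd t).smul_const v).deriv
      have hηzero : ∀ t, t ∉ Ioo c d → η t = 0 ∧ deriv η t = 0 := by
        intro t ht
        have hout : t ∉ Metric.closedBall t₀ φ.rOut := fun hmem => ht (hcb hmem)
        have hdist : φ.rOut ≤ dist t t₀ :=
          le_of_lt (not_le.mp (fun hle => hout (Metric.mem_closedBall.mpr hle)))
        constructor
        · rw [hηdef]; simp only [φ.zero_of_le_dist hdist, zero_smul]
        · rw [hηd t]
          have htsupp : t ∉ tsupport (φ : ℝ → ℝ) := by
            rw [φ.tsupport_eq]; exact hout
          rw [Function.notMem_support.mp (fun hs => htsupp (support_deriv_subset hs)),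
            zero_smul]
      have hvz := varzero η hη
        (fun t htle => (hηzero t (fun hmem => absurd (lt_of_lt_of_le hmem.1 htle)
          (not_lt.mpr (by linarith)))).1)
        ((hηzero t₂ (fun hmem => absurd hmem.2 (not_lt.mpr (by linarith)))).1)
      have hηc : Continuous η := hη.continuous
      have hη'c : Continuous (deriv η) := by
        have e : deriv η = fun t => deriv (φ : ℝ → ℝ) t • v := funext hηd
        rw [e]
        exact ((φ.contDiff (n := 2)).continuous_deriv (by norm_num)).smul continuous_const
      set A : ℝ → ℝ := fun t => ⟪dL2 L τ q t, η t⟫ + ⟪dL3 L τ q t, deriv η t⟫ with hAdef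
      set f : ℝ → ℝ :=
        fun s => ⟪dL4 L τ q (s + τ), η s⟫ + ⟪dL5 L τ q (s + τ), deriv η s⟫ with hfdef
      have hAc : Continuous A := (hd2.inner hηc).add (hd3C.continuous.inner hη'c)
      have hfc : Continuous f := (hd4τ.inner hηc).add (hd5τC.continuous.inner hη'c)
      have step1 : (∫ t in t₁..t₂, fderiv ℝ (ELaux.Fn L) (ELaux.pth τ q t) (ELaux.dir τ η t))
          = ∫ t in t₁..t₂, (A t + f (t - τ)) := by
        apply intervalIntegral.integral_congr
        intro t _
        show fderiv ℝ (ELaux.Fn L) (ELaux.pth τ q t) (ELaux.dir τ η t) = A t + f (t - τ)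
        rw [ELaux.integrand_eq hL q η t]
        simp only [hAdef, hfdef, sub_add_cancel]
        ring
      have step2 : (∫ t in t₁..t₂, (A t + f (t - τ)))
          = (∫ t in t₁..t₂, A t) + ∫ t in t₁..t₂, f (t - τ) :=
        intervalIntegral.integral_add (hAc.intervalIntegrable _ _)
          ((hfc.comp (continuous_id.sub continuous_const)).intervalIntegrable _ _)
      have step3 : (∫ t in t₁..t₂, f (t - τ)) = ∫ s in (t₁ - τ)..(t₂ - τ), f s :=
        intervalIntegral.integral_comp_sub_right f τ
      have step3' : (∫ s in (t₁ - τ)..(t₂ - τ), f s) = 0 := by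
        rw [← intervalIntegral.integral_zero (a := t₁ - τ) (b := t₂ - τ) (μ := volume)]
        apply intervalIntegral.integral_congr
        intro s hs
        rw [uIcc_of_le (by linarith)] at hs
        have : s ∉ Ioo c d := fun hmem => absurd (lt_of_le_of_lt hs.2 hc1)
          (not_lt.mpr (le_of_lt hmem.1))
        obtain ⟨h1, h2⟩ := hηzero s this
        rw [hfdef]
        simp only [h1, h2, inner_zero_right, add_zero]
      have step4 : (∫ t in t₁..t₂, A t) = ∫ t in c..d, A t := by
        apply ELaux.shrink hAc (by linarith) (le_of_lt hcd) (by linarith)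
        intro t ht
        rw [hAdef]
        obtain ⟨h1, h2⟩ := hηzero t ht
        simp only [h1, h2, inner_zero_right, add_zero]
      have step7 : (∫ t in c..d, A t)
          = ∫ t in c..d, ((φ : ℝ → ℝ) t * ⟪R₂ t, v⟫ + deriv (φ : ℝ → ℝ) t * ⟪G₂ t, v⟫) := by
        apply intervalIntegral.integral_congr
        intro t _
        simp only [hAdef, hηdef, hηd t, ((hφd t).smul_const v).deriv, hR₂def, hG₂def, real_inner_smul_right]
      rw [step1, step2, step3, step3', step4, step7, add_zero] at hvz
      exact hvz
    have hIoo := ELaux.eliminate hG₂C hR₂C key₂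
    have hext := ELaux.extend (E := fun t => deriv G₂ t - R₂ t)
      ((hG₂C.continuous_deriv le_rfl).sub hR₂C) hτt₂
      (fun t ht => sub_eq_zero.mpr (hIoo t ht))
    intro t ht
    exact sub_eq_zero.mp (hext t ht)



end
end

section
/- Let q : [t₁−τ,t₂] → ℝⁿ be a C² extremal of J^τ (i.e. q satisfies the Euler–Lagrange equations with time delay: d/dt(∂₃L[q]_τ(t) + ∂₅L[q]_τ(t+τ)) = ∂₂L[q]_τ(t) + ∂₄L[q]_τ(t+τ) on [t₁,t₂−τ], and d/dt ∂₃L[q]_τ(t) = ∂₂L[q]_τ(t) on [t₂−τ,t₂]), and suppose that ∂₄L[q]_τ(t+τ)·q̇(t) + ∂₅L[q]_τ(t+τ)·q̈(t) = 0 for all t ∈ [t₁−τ, t₂−τ]. Then q satisfies the DuBois–Reymond conditions with time delay: (i) for all t ∈ [t₁, t₂−τ], d/dt{L[q]_τ(t) − q̇(t)·(∂₃L[q]_τ(t) + ∂₅L[q]_τ(t+τ))} = ∂₁L[q]_τ(t); and (ii) for all t ∈ [t₂−τ, t₂], d/dt{L[q]_τ(t) − q̇(t)·∂₃L[q]_τ(t)}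 = ∂₁L[q]_τ(t). -/
open Set MeasureTheory RealInnerProductSpace

noncomputable section

namespace DBR
variable {n : ℕ}

abbrev EE (n : ℕ) := ℝ × Vec n × Vec n × Vec n × Vec n

/-- The uncurried Lagrangian. -/
def fL (L : Lag n) : EE n → ℝ := fun p => L p.1 p.2.1 p.2.2.1 p.2.2.2.1 p.2.2.2.2

/-- The delayed trajectory curve in extended phase space. -/
def Fc (τ : ℝ) (q : ℝ → Vec n) (t : ℝ) : EE n :=
  (t, q t, deriv q t, q (t - τ), deriv q (t - τ))

def ι₂ (n : ℕ) : Vec n →L[ℝ] EE n :=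
  (0 : Vec n →L[ℝ] ℝ).prod ((ContinuousLinearMap.id ℝ (Vec n)).prod
    ((0 : Vec n →L[ℝ] Vec n).prod ((0 : Vec n →L[ℝ] Vec n).prod (0 : Vec n →L[ℝ] Vec n))))

def ι₃ (n : ℕ) : Vec n →L[ℝ] EE n :=
  (0 : Vec n →L[ℝ] ℝ).prod ((0 : Vec n →L[ℝ] Vec n).prod
    ((ContinuousLinearMap.id ℝ (Vec n)).prod
      ((0 : Vec n →L[ℝ] Vec n).prod (0 : Vec n →L[ℝ] Vec n))))

def ι₄ (n : ℕ) : Vec n →L[ℝ] EE n :=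
  (0 : Vec n →L[ℝ] ℝ).prod ((0 : Vec n →L[ℝ] Vec n).prod
    ((0 : Vec n →L[ℝ] Vec n).prod
      ((ContinuousLinearMap.id ℝ (Vec n)).prod (0 : Vec n →L[ℝ] Vec n))))

def ι₅ (n : ℕ) : Vec n →L[ℝ] EE n :=
  (0 : Vec n →L[ℝ] ℝ).prod ((0 : Vec n →L[ℝ] Vec n).prod
    ((0 : Vec n →L[ℝ] Vec n).prod
      ((0 : Vec n →L[ℝ] Vec n).prod (ContinuousLinearMap.id ℝ (Vec n)))))

lemma hasFDerivAt_fL {L : Lag n} (hL : LagC2 L) (p : EE n) :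
    HasFDerivAt (fL L) (fderiv ℝ (fL L) p) p :=
  ((hL.differentiable (by norm_num)).differentiableAt).hasFDerivAt

lemma partial2 {L : Lag n} (hL : LagC2 L) (t : ℝ) (a b c d : Vec n) :
    HasFDerivAt (fun y => L t y b c d)
      ((fderiv ℝ (fL L) ((t, a, b, c, d) : EE n)).comp (ι₂ n)) a := by
  have hg : HasFDerivAt (fun y : Vec n => ((t, y, b, c, d) : EE n)) (ι₂ n) a :=
    (hasFDerivAt_const t a).prodMk ((hasFDerivAt_id a).prodMk
      ((hasFDerivAt_const b a).prodMk ((hasFDerivAt_const c a).prodMk (hasFDerivAt_const d a))))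
  exact (hasFDerivAt_fL hL _).comp a hg

lemma partial3 {L : Lag n} (hL : LagC2 L) (t : ℝ) (a b c d : Vec n) :
    HasFDerivAt (fun v => L t a v c d)
      ((fderiv ℝ (fL L) ((t, a, b, c, d) : EE n)).comp (ι₃ n)) b := by
  have hg : HasFDerivAt (fun v : Vec n => ((t, a, v, c, d) : EE n)) (ι₃ n) b :=
    (hasFDerivAt_const t b).prodMk ((hasFDerivAt_const a b).prodMk
      ((hasFDerivAt_id b).prodMk ((hasFDerivAt_const c b).prodMk (hasFDerivAt_const d b))))
  exact (hasFDerivAt_fL hL _).comp b hg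

lemma partial4 {L : Lag n} (hL : LagC2 L) (t : ℝ) (a b c d : Vec n) :
    HasFDerivAt (fun y => L t a b y d)
      ((fderiv ℝ (fL L) ((t, a, b, c, d) : EE n)).comp (ι₄ n)) c := by
  have hg : HasFDerivAt (fun y : Vec n => ((t, a, b, y, d) : EE n)) (ι₄ n) c :=
    (hasFDerivAt_const t c).prodMk ((hasFDerivAt_const a c).prodMk
      ((hasFDerivAt_const b c).prodMk ((hasFDerivAt_id c).prodMk (hasFDerivAt_const d c))))
  exact (hasFDerivAt_fL hL _).comp c hg

lemma partial5 {L : Lag n} (hL : LagC2 L) (t : ℝ) (a b c d : Vec n) :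
    HasFDerivAt (fun v => L t a b c v)
      ((fderiv ℝ (fL L) ((t, a, b, c, d) : EE n)).comp (ι₅ n)) d := by
  have hg : HasFDerivAt (fun v : Vec n => ((t, a, b, c, v) : EE n)) (ι₅ n) d :=
    (hasFDerivAt_const t d).prodMk ((hasFDerivAt_const a d).prodMk
      ((hasFDerivAt_const b d).prodMk ((hasFDerivAt_const c d).prodMk (hasFDerivAt_id d))))
  exact (hasFDerivAt_fL hL _).comp d hg

lemma inner_gradient (g : Vec n → ℝ) (x w : Vec n) :
    ⟪gradient g x, w⟫ = fderiv ℝ g x w := by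
  unfold gradient
  exact InnerProductSpace.toDual_symm_apply

lemma gradient_sum (g : Vec n → ℝ) (x : Vec n) :
    gradient g x = ∑ i, (fderiv ℝ g x (EuclideanSpace.basisFun (Fin n) ℝ i)) •
      (EuclideanSpace.basisFun (Fin n) ℝ i : Vec n) := by
  conv_lhs => rw [← (EuclideanSpace.basisFun (Fin n) ℝ).sum_repr' (gradient g x)]
  refine Finset.sum_congr rfl fun i _ => ?_
  rw [real_inner_comm, inner_gradient]

lemma contDiff_deriv {q : ℝ → Vec n} (hq : ContDiff ℝ 2 q) : ContDiff ℝ 1 (deriv q) := by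
  rw [show (2 : WithTop ℕ∞) = 1 + 1 by norm_num] at hq
  exact (contDiff_succ_iff_deriv.mp hq).2.2

lemma contDiff_Fc {q : ℝ → Vec n} (τ : ℝ) (hq : ContDiff ℝ 2 q) :
    ContDiff ℝ 1 (Fc τ q) := by
  have hsub : ContDiff ℝ 1 (fun s : ℝ => s - τ) := contDiff_id.sub contDiff_const
  have hq1 : ContDiff ℝ 1 q := hq.of_le (by norm_num)
  exact contDiff_id.prodMk (hq1.prodMk ((contDiff_deriv hq).prodMk
    ((hq1.comp hsub).prodMk ((contDiff_deriv hq).comp hsub))))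

lemma hasDerivAt_q {q : ℝ → Vec n} (hq : ContDiff ℝ 2 q) (t : ℝ) :
    HasDerivAt q (deriv q t) t :=
  ((hq.differentiable (by norm_num)) t).hasDerivAt

lemma hasDerivAt_dq {q : ℝ → Vec n} (hq : ContDiff ℝ 2 q) (t : ℝ) :
    HasDerivAt (deriv q) (deriv (deriv q) t) t :=
  (((contDiff_deriv hq).differentiable one_ne_zero) t).hasDerivAt

lemma hasDerivAt_q_shift {q : ℝ → Vec n} (hq : ContDiff ℝ 2 q) (τ t : ℝ) :
    HasDerivAt (fun s => q (s - τ)) (deriv q (t - τ)) t := by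
  have h := (hasDerivAt_q hq (t - τ)).scomp t ((hasDerivAt_id t).sub_const τ)
  simp only [one_smul] at h
  exact h

lemma hasDerivAt_dq_shift {q : ℝ → Vec n} (hq : ContDiff ℝ 2 q) (τ t : ℝ) :
    HasDerivAt (fun s => deriv q (s - τ)) (deriv (deriv q) (t - τ)) t := by
  have h := (hasDerivAt_dq hq (t - τ)).scomp t ((hasDerivAt_id t).sub_const τ)
  simp only [one_smul] at h
  exact h

lemma hasDerivAt_Fc {q : ℝ → Vec n} (hq : ContDiff ℝ 2 q) (τ t : ℝ) :
    HasDerivAt (Fc τ q)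
      ((1 : ℝ), deriv q t, deriv (deriv q) t, deriv q (t - τ), deriv (deriv q) (t - τ)) t :=
  (hasDerivAt_id t).prodMk ((hasDerivAt_q hq t).prodMk ((hasDerivAt_dq hq t).prodMk
    ((hasDerivAt_q_shift hq τ t).prodMk (hasDerivAt_dq_shift hq τ t))))

lemma hasDerivAt_lagAlong {L : Lag n} {q : ℝ → Vec n} (hL : LagC2 L)
    (hq : ContDiff ℝ 2 q) (τ t : ℝ) :
    HasDerivAt (lagAlong L τ q)
      (fderiv ℝ (fL L) (Fc τ q t)
        ((1 : ℝ), deriv q t, deriv (deriv q) t, deriv q (t - τ), deriv (deriv q) (t - τ))) t := by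
  have h := (hasFDerivAt_fL hL (Fc τ q t)).comp_hasDerivAt t (hasDerivAt_Fc hq τ t)
  exact h

lemma dL1_eq {L : Lag n} {q : ℝ → Vec n} (hL : LagC2 L) (τ t : ℝ) :
    dL1 L τ q t = fderiv ℝ (fL L) (Fc τ q t) ((1 : ℝ), (0 : Vec n), 0, 0, 0) := by
  have hc : HasDerivAt
      (fun s : ℝ => ((s, q t, deriv q t, q (t - τ), deriv q (t - τ)) : EE n))
      ((1 : ℝ), (0 : Vec n), 0, 0, 0) t :=
    (hasDerivAt_id t).prodMk ((hasDerivAt_const t _).prodMk ((hasDerivAt_const t _).prodMk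
      ((hasDerivAt_const t _).prodMk (hasDerivAt_const t _))))
  have h := (hasFDerivAt_fL hL
      ((t, q t, deriv q t, q (t - τ), deriv q (t - τ)) : EE n)).comp_hasDerivAt t hc
  exact h.deriv

lemma inner_dL2 {L : Lag n} {q : ℝ → Vec n} (hL : LagC2 L) (τ t : ℝ) (w : Vec n) :
    ⟪dL2 L τ q t, w⟫ = fderiv ℝ (fL L) (Fc τ q t) ((0 : ℝ), w, 0, 0, 0) := by
  rw [dL2, inner_gradient,
    (partial2 hL t (q t) (deriv q t) (q (t - τ)) (deriv q (t - τ))).fderiv]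
  simp [ι₂, Fc]

lemma inner_dL3 {L : Lag n} {q : ℝ → Vec n} (hL : LagC2 L) (τ t : ℝ) (w : Vec n) :
    ⟪dL3 L τ q t, w⟫ = fderiv ℝ (fL L) (Fc τ q t) ((0 : ℝ), 0, w, 0, 0) := by
  rw [dL3, inner_gradient,
    (partial3 hL t (q t) (deriv q t) (q (t - τ)) (deriv q (t - τ))).fderiv]
  simp [ι₃, Fc]

lemma inner_dL4 {L : Lag n} {q : ℝ → Vec n} (hL : LagC2 L) (τ t : ℝ) (w : Vec n) :
    ⟪dL4 L τ q t, w⟫ = fderiv ℝ (fL L) (Fc τ q t) ((0 : ℝ), 0, 0, w, 0) := by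
  rw [dL4, inner_gradient,
    (partial4 hL t (q t) (deriv q t) (q (t - τ)) (deriv q (t - τ))).fderiv]
  simp [ι₄, Fc]

lemma inner_dL5 {L : Lag n} {q : ℝ → Vec n} (hL : LagC2 L) (τ t : ℝ) (w : Vec n) :
    ⟪dL5 L τ q t, w⟫ = fderiv ℝ (fL L) (Fc τ q t) ((0 : ℝ), 0, 0, 0, w) := by
  rw [dL5, inner_gradient,
    (partial5 hL t (q t) (deriv q t) (q (t - τ)) (deriv q (t - τ))).fderiv]
  simp [ι₅, Fc]

lemma diff_D {L : Lag n} {q : ℝ → Vec n} (hL : LagC2 L) (hq : ContDiff ℝ 2 q) (τ : ℝ) :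
    Differentiable ℝ (fun s => fderiv ℝ (fL L) (Fc τ q s)) :=
  ((hL.fderiv_right (by norm_num)).comp (contDiff_Fc τ hq)).differentiable one_ne_zero

lemma dL3_formula {L : Lag n} {q : ℝ → Vec n} (hL : LagC2 L) (τ t : ℝ) :
    dL3 L τ q t = ∑ i, (fderiv ℝ (fL L) (Fc τ q t)
      (ι₃ n (EuclideanSpace.basisFun (Fin n) ℝ i))) •
      (EuclideanSpace.basisFun (Fin n) ℝ i : Vec n) := by
  rw [dL3, gradient_sum]
  refine Finset.sum_congr rfl fun i _ => ?_
  rw [(partial3 hL t (q t) (deriv q t) (q (t - τ)) (deriv q (t - τ))).fderiv]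
  rfl

lemma dL5_formula {L : Lag n} {q : ℝ → Vec n} (hL : LagC2 L) (τ t : ℝ) :
    dL5 L τ q t = ∑ i, (fderiv ℝ (fL L) (Fc τ q t)
      (ι₅ n (EuclideanSpace.basisFun (Fin n) ℝ i))) •
      (EuclideanSpace.basisFun (Fin n) ℝ i : Vec n) := by
  rw [dL5, gradient_sum]
  refine Finset.sum_congr rfl fun i _ => ?_
  rw [(partial5 hL t (q t) (deriv q t) (q (t - τ)) (deriv q (t - τ))).fderiv]
  rfl

lemma diff_dL3 {L : Lag n} {q : ℝ → Vec n} (hL : LagC2 L) (hq : ContDiff ℝ 2 q) (τ : ℝ) :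
    Differentiable ℝ (dL3 L τ q) := by
  have he : dL3 L τ q = fun s => ∑ i, (fderiv ℝ (fL L) (Fc τ q s)
      (ι₃ n (EuclideanSpace.basisFun (Fin n) ℝ i))) •
      (EuclideanSpace.basisFun (Fin n) ℝ i : Vec n) :=
    funext fun s => dL3_formula hL τ s
  rw [he]
  exact Differentiable.fun_sum fun i _ =>
    (((diff_D hL hq τ).clm_apply (differentiable_const _)).smul_const
      (EuclideanSpace.basisFun (Fin n) ℝ i : Vec n))

lemma diff_dL5 {L : Lag n} {q : ℝ → Vec n} (hL : LagC2 L) (hq : ContDiff ℝ 2 q) (τ : ℝ) :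
    Differentiable ℝ (dL5 L τ q) := by
  have he : dL5 L τ q = fun s => ∑ i, (fderiv ℝ (fL L) (Fc τ q s)
      (ι₅ n (EuclideanSpace.basisFun (Fin n) ℝ i))) •
      (EuclideanSpace.basisFun (Fin n) ℝ i : Vec n) :=
    funext fun s => dL5_formula hL τ s
  rw [he]
  exact Differentiable.fun_sum fun i _ =>
    (((diff_D hL hq τ).clm_apply (differentiable_const _)).smul_const
      (EuclideanSpace.basisFun (Fin n) ℝ i : Vec n))

end DBR

/-- DuBois–Reymond necessary conditions with time delay, along a `C²`
Euler–Lagrange extremal satisfying the extra condition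
`∂₄L[q]_τ(t+τ)·q̇(t) + ∂₅L[q]_τ(t+τ)·q̈(t) = 0` on `[t₁-τ, t₂-τ]`. -/
theorem duBois_Reymond_with_time_delay
    {n : ℕ} (hn : 0 < n) (t₁ t₂ τ : ℝ) (ht : t₁ < t₂) (hτ : 0 < τ)
    (hτ' : τ < t₂ - t₁) (L : Lag n) (hL : LagC2 L)
    (q : ℝ → Vec n) (hq : ContDiff ℝ 2 q)
    (hEL : ELdelay L t₁ t₂ τ q)
    (hcond : ∀ t ∈ Icc (t₁ - τ) (t₂ - τ),
      ⟪dL4 L τ q (t + τ), deriv q t⟫ + ⟪dL5 L τ q (t + τ), deriv (deriv q) t⟫ = 0) :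
    (∀ t ∈ Icc t₁ (t₂ - τ),
      deriv (fun s => lagAlong L τ q s
          - ⟪deriv q s, dL3 L τ q s + dL5 L τ q (s + τ)⟫) t
        = dL1 L τ q t) ∧
    (∀ t ∈ Icc (t₂ - τ) t₂,
      deriv (fun s => lagAlong L τ q s - ⟪deriv q s, dL3 L τ q s⟫) t
        = dL1 L τ q t) := by
  classical
  set D : ℝ → DBR.EE n →L[ℝ] ℝ := fun s => fderiv ℝ (DBR.fL L) (DBR.Fc τ q s) with hD
  have hdec : ∀ t : ℝ,
      D t ((1 : ℝ), deriv q t, deriv (deriv q) t, deriv q (t - τ), deriv (deriv q) (t - τ))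
        = dL1 L τ q t + ⟪dL2 L τ q t, deriv q t⟫ + ⟪dL3 L τ q t, deriv (deriv q) t⟫
          + ⟪dL4 L τ q t, deriv q (t - τ)⟫ + ⟪dL5 L τ q t, deriv (deriv q) (t - τ)⟫ := by
    intro t
    have hsplit : ((1 : ℝ), deriv q t, deriv (deriv q) t, deriv q (t - τ),
        deriv (deriv q) (t - τ)) =
        (((1 : ℝ), (0 : Vec n), (0 : Vec n), (0 : Vec n), (0 : Vec n)) : DBR.EE n)
        + ((0 : ℝ), deriv q t, 0, 0, 0) + ((0 : ℝ), 0, deriv (deriv q) t, 0, 0)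
        + ((0 : ℝ), 0, 0, deriv q (t - τ), 0)
        + ((0 : ℝ), 0, 0, 0, deriv (deriv q) (t - τ)) := by
      simp [Prod.ext_iff]
    rw [hsplit]
    simp only [map_add]
    rw [← DBR.dL1_eq hL τ t, ← DBR.inner_dL2 hL τ t, ← DBR.inner_dL3 hL τ t,
      ← DBR.inner_dL4 hL τ t, ← DBR.inner_dL5 hL τ t]
  have hc1 : ∀ t ∈ Icc t₁ t₂,
      ⟪dL4 L τ q t, deriv q (t - τ)⟫ + ⟪dL5 L τ q t, deriv (deriv q) (t - τ)⟫ = 0 := by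
    intro t htt
    have h := hcond (t - τ) ⟨by linarith [htt.1], by linarith [htt.2]⟩
    rwa [sub_add_cancel] at h
  constructor
  · intro t htt
    have hmem : t ∈ Icc (t₁ - τ) (t₂ - τ) := ⟨by linarith [htt.1], htt.2⟩
    have hc2 := hcond t hmem
    have hc1' := hc1 t ⟨htt.1, by linarith [htt.2]⟩
    have h1 := DBR.hasDerivAt_lagAlong hL hq τ t
    have hPdiff : Differentiable ℝ (fun s => dL3 L τ q s + dL5 L τ q (s + τ)) :=
      (DBR.diff_dL3 hL hq τ).add
        ((DBR.diff_dL5 hL hq τ).comp (differentiable_id.add_const τ))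
    have hPd : HasDerivAt (fun s => dL3 L τ q s + dL5 L τ q (s + τ))
        (dL2 L τ q t + dL4 L τ q (t + τ)) t := by
      have h := (hPdiff t).hasDerivAt
      rwa [hEL.1 t htt] at h
    have h2 := (DBR.hasDerivAt_dq hq t).inner ℝ hPd
    have h3 := (h1.fun_sub h2).deriv
    rw [h3, hdec t]
    simp only [inner_add_right]
    linarith [hc1', hc2, real_inner_comm (deriv q t) (dL2 L τ q t),
      real_inner_comm (deriv q t) (dL4 L τ q (t + τ)),
      real_inner_comm (deriv (deriv q) t) (dL3 L τ q t),
      real_inner_comm (deriv (deriv q) t) (dL5 L τ q (t + τ))]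
  · intro t htt
    have hc1' := hc1 t ⟨by linarith [htt.1], htt.2⟩
    have h1 := DBR.hasDerivAt_lagAlong hL hq τ t
    have hPd : HasDerivAt (fun s => dL3 L τ q s) (dL2 L τ q t) t := by
      have h := ((DBR.diff_dL3 hL hq τ) t).hasDerivAt
      rwa [hEL.2 t htt] at h
    have h2 := (DBR.hasDerivAt_dq hq t).inner ℝ hPd
    have h3 := (h1.fun_sub h2).deriv
    rw [h3, hdec t]
    linarith [hc1', real_inner_comm (deriv q t) (dL2 L τ q t),
      real_inner_comm (deriv (deriv q) t) (dL3 L τ q t)]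

end
end

section
/- Let λ ∈ ℝ and let q : [t₁−τ,t₂] → ℝⁿ be a C² isoperimetric extremal with time delay, i.e. q satisfies the isoperimetric Euler–Lagrange equations with time delay for the augmented Lagrangian F = L − λ·g: d/dt(∂₃F[q,λ]_τ(t) + ∂₅F[q,λ]_τ(t+τ)) = ∂₂F[q,λ]_τ(t) + ∂₄F[q,λ]_τ(t+τ) on [t₁,t₂−τ], and d/dt ∂₃F[q,λ]_τ(t) = ∂₂F[q,λ]_τ(t) on [t₂−τ,t₂]. Suppose moreover that ∂₄F[q,λ]_τ(t+τ)·q̇(t) + ∂₅F[q,λ]_τ(t+τ)·q̈(t) = 0 for all t ∈ [t₁−τ, t₂−τ]. Then q satisfies the isoperimetric DuBois–Reymond conditions with time delay: d/dt{F[q,λ]_τ(t) − q̇(t)·(∂₃F[q,λ]_τ(t) + ∂₅F[q,λ]_τ(t+τ))} = ∂₁F[q,λ]_τ(t) for all t ∈ [t₁, t₂−τ], and d/dt{F[q,λ]_τ(t) − q̇(t)·∂₃F[q,λ]_τ(t)} = ∂₁F[q,λ]_τ(t) for all t ∈ [t₂−τ, t₂]. -/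
open Set MeasureTheory RealInnerProductSpace

noncomputable section

/-- The augmented Lagrangian `F = L - λ·g`. -/
def Aug {n : ℕ} (L g : Lag n) (lam : ℝ) : Lag n :=
  fun t a b c d => L t a b c d - lam * g t a b c d

section Helper
open InnerProductSpace

namespace Scratch
variable {n : ℕ}

abbrev EE (n : ℕ) := ℝ × Vec n × Vec n × Vec n × Vec n

def unc (F : Lag n) : EE n → ℝ := fun p => F p.1 p.2.1 p.2.2.1 p.2.2.2.1 p.2.2.2.2

def path (τ : ℝ) (q : ℝ → Vec n) (t : ℝ) : EE n :=
  (t, q t, deriv q t, q (t - τ), deriv q (t - τ))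

def J2 (n : ℕ) : Vec n →L[ℝ] EE n :=
  (0 : Vec n →L[ℝ] ℝ).prod ((ContinuousLinearMap.id ℝ (Vec n)).prod 0)
def J3 (n : ℕ) : Vec n →L[ℝ] EE n :=
  (0 : Vec n →L[ℝ] ℝ).prod ((0 : Vec n →L[ℝ] Vec n).prod
    ((ContinuousLinearMap.id ℝ (Vec n)).prod 0))
def J4 (n : ℕ) : Vec n →L[ℝ] EE n :=
  (0 : Vec n →L[ℝ] ℝ).prod ((0 : Vec n →L[ℝ] Vec n).prod
    ((0 : Vec n →L[ℝ] Vec n).prod ((ContinuousLinearMap.id ℝ (Vec n)).prod 0)))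
def J5 (n : ℕ) : Vec n →L[ℝ] EE n :=
  (0 : Vec n →L[ℝ] ℝ).prod ((0 : Vec n →L[ℝ] Vec n).prod
    ((0 : Vec n →L[ℝ] Vec n).prod ((0 : Vec n →L[ℝ] Vec n).prod
      (ContinuousLinearMap.id ℝ (Vec n)))))

variable {F : Lag n} {τ : ℝ} {q : ℝ → Vec n}

section slots
variable (hF : Differentiable ℝ (unc F)) (t₀ : ℝ) (a b c d : Vec n)
include hF

lemma slot2_hasFDerivAt :
    HasFDerivAt (fun v => F t₀ v b c d)
      ((fderiv ℝ (unc F) (t₀, a, b, c, d)).comp (J2 n)) a := by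
  have hι : HasFDerivAt (fun v : Vec n => ((t₀, v, b, c, d) : EE n)) (J2 n) a :=
    HasFDerivAt.prodMk (hasFDerivAt_const t₀ _) (HasFDerivAt.prodMk (hasFDerivAt_id _)
      (hasFDerivAt_const (b, c, d) _))
  exact (hF _).hasFDerivAt.comp a hι

lemma slot3_hasFDerivAt :
    HasFDerivAt (fun v => F t₀ a v c d)
      ((fderiv ℝ (unc F) (t₀, a, b, c, d)).comp (J3 n)) b := by
  have hι : HasFDerivAt (fun v : Vec n => ((t₀, a, v, c, d) : EE n)) (J3 n) b :=
    HasFDerivAt.prodMk (hasFDerivAt_const t₀ _) (HasFDerivAt.prodMk (hasFDerivAt_const a _)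
      (HasFDerivAt.prodMk (hasFDerivAt_id _) (HasFDerivAt.prodMk (hasFDerivAt_const c _) (hasFDerivAt_const d _))))
  exact (hF _).hasFDerivAt.comp b hι

lemma slot4_hasFDerivAt :
    HasFDerivAt (fun v => F t₀ a b v d)
      ((fderiv ℝ (unc F) (t₀, a, b, c, d)).comp (J4 n)) c := by
  have hι : HasFDerivAt (fun v : Vec n => ((t₀, a, b, v, d) : EE n)) (J4 n) c :=
    HasFDerivAt.prodMk (hasFDerivAt_const t₀ _) (HasFDerivAt.prodMk (hasFDerivAt_const a _)
      (HasFDerivAt.prodMk (hasFDerivAt_const b _) (HasFDerivAt.prodMk (hasFDerivAt_id _) (hasFDerivAt_const d _))))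
  exact (hF _).hasFDerivAt.comp c hι

lemma slot5_hasFDerivAt :
    HasFDerivAt (fun v => F t₀ a b c v)
      ((fderiv ℝ (unc F) (t₀, a, b, c, d)).comp (J5 n)) d := by
  have hι : HasFDerivAt (fun v : Vec n => ((t₀, a, b, c, v) : EE n)) (J5 n) d :=
    HasFDerivAt.prodMk (hasFDerivAt_const t₀ _) (HasFDerivAt.prodMk (hasFDerivAt_const a _)
      (HasFDerivAt.prodMk (hasFDerivAt_const b _) (HasFDerivAt.prodMk (hasFDerivAt_const c _) (hasFDerivAt_id _))))
  exact (hF _).hasFDerivAt.comp d hι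

lemma slot1_hasDerivAt :
    HasDerivAt (fun s => F s a b c d)
      (fderiv ℝ (unc F) (t₀, a, b, c, d) (1, 0, 0, 0, 0)) t₀ := by
  have hι : HasDerivAt (fun s : ℝ => ((s, a, b, c, d) : EE n))
      ((1 : ℝ), (0 : Vec n), (0 : Vec n), (0 : Vec n), (0 : Vec n)) t₀ :=
    HasDerivAt.prodMk (hasDerivAt_id _) (HasDerivAt.prodMk (hasDerivAt_const _ _) (HasDerivAt.prodMk (hasDerivAt_const _ _)
      (HasDerivAt.prodMk (hasDerivAt_const _ _) (hasDerivAt_const _ _))))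
  exact (hF _).hasFDerivAt.comp_hasDerivAt t₀ hι

end slots

-- expressions for the dL's along the path
lemma dL1_eq (hF : Differentiable ℝ (unc F)) (t : ℝ) :
    dL1 F τ q t = fderiv ℝ (unc F) (path τ q t) (1, 0, 0, 0, 0) :=
  (slot1_hasDerivAt hF t (q t) (deriv q t) (q (t - τ)) (deriv q (t - τ))).deriv

lemma dL2_inner (hF : Differentiable ℝ (unc F)) (t : ℝ) (h : Vec n) :
    ⟪dL2 F τ q t, h⟫ = fderiv ℝ (unc F) (path τ q t) (0, h, 0, 0, 0) := by
  rw [dL2, gradient, (slot2_hasFDerivAt hF t (q t) (deriv q t) (q (t - τ)) (deriv q (t - τ))).fderiv, toDual_symm_apply]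
  simp [J2, path]
  rfl

lemma dL3_inner (hF : Differentiable ℝ (unc F)) (t : ℝ) (h : Vec n) :
    ⟪dL3 F τ q t, h⟫ = fderiv ℝ (unc F) (path τ q t) (0, 0, h, 0, 0) := by
  rw [dL3, gradient, (slot3_hasFDerivAt hF t (q t) (deriv q t) (q (t - τ)) (deriv q (t - τ))).fderiv, toDual_symm_apply]
  simp [J3, path]
  rfl

lemma dL4_inner (hF : Differentiable ℝ (unc F)) (t : ℝ) (h : Vec n) :
    ⟪dL4 F τ q t, h⟫ = fderiv ℝ (unc F) (path τ q t) (0, 0, 0, h, 0) := by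
  rw [dL4, gradient, (slot4_hasFDerivAt hF t (q t) (deriv q t) (q (t - τ)) (deriv q (t - τ))).fderiv, toDual_symm_apply]
  simp [J4, path]

lemma dL5_inner (hF : Differentiable ℝ (unc F)) (t : ℝ) (h : Vec n) :
    ⟪dL5 F τ q t, h⟫ = fderiv ℝ (unc F) (path τ q t) (0, 0, 0, 0, h) := by
  rw [dL5, gradient, (slot5_hasFDerivAt hF t (q t) (deriv q t) (q (t - τ)) (deriv q (t - τ))).fderiv, toDual_symm_apply]
  simp [J5, path]

lemma dL3_formula (hF : Differentiable ℝ (unc F)) (t : ℝ) :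
    dL3 F τ q t = (toDual ℝ (Vec n)).symm ((fderiv ℝ (unc F) (path τ q t)).comp (J3 n)) := by
  rw [dL3, gradient, (slot3_hasFDerivAt hF t (q t) (deriv q t) (q (t - τ)) (deriv q (t - τ))).fderiv]
  rfl

lemma dL5_formula (hF : Differentiable ℝ (unc F)) (t : ℝ) :
    dL5 F τ q t = (toDual ℝ (Vec n)).symm ((fderiv ℝ (unc F) (path τ q t)).comp (J5 n)) := by
  rw [dL5, gradient, (slot5_hasFDerivAt hF t (q t) (deriv q t) (q (t - τ)) (deriv q (t - τ))).fderiv]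
  rfl

section master
variable (hF : Differentiable ℝ (unc F)) (hq : ContDiff ℝ 2 q)

lemma q_diff (hq : ContDiff ℝ 2 q) : Differentiable ℝ q :=
  hq.differentiable (by norm_num)

lemma dq_contDiff (hq : ContDiff ℝ 2 q) : ContDiff ℝ 1 (deriv q) := by
  have h2 : ContDiff ℝ ((1 : ℕ) + 1) q := by exact_mod_cast hq
  exact (contDiff_succ_iff_deriv.mp h2).2.2

lemma dq_diff (hq : ContDiff ℝ 2 q) : Differentiable ℝ (deriv q) :=
  (dq_contDiff hq).differentiable one_ne_zero

/-- derivative of the delayed path -/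
lemma path_hasDerivAt (hq : ContDiff ℝ 2 q) (t : ℝ) :
    HasDerivAt (path τ q)
      ((1 : ℝ), deriv q t, deriv (deriv q) t, deriv q (t - τ), deriv (deriv q) (t - τ)) t := by
  have hshift : HasDerivAt (fun s : ℝ => s - τ) 1 t := by
    simpa using (hasDerivAt_id t).sub_const τ
  have h1 : HasDerivAt (fun s : ℝ => q (s - τ)) (deriv q (t - τ)) t := by
    have h := (HasDerivAt.scomp t ((q_diff hq (t - τ)).hasDerivAt) hshift)
    rw [one_smul] at h
    exact h
  have h2 : HasDerivAt (fun s : ℝ => deriv q (s - τ)) (deriv (deriv q) (t - τ)) t := by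
    have h := (HasDerivAt.scomp t ((dq_diff hq (t - τ)).hasDerivAt) hshift)
    rw [one_smul] at h
    exact h
  exact HasDerivAt.prodMk (hasDerivAt_id t) (HasDerivAt.prodMk ((q_diff hq t).hasDerivAt)
    (HasDerivAt.prodMk ((dq_diff hq t).hasDerivAt) (HasDerivAt.prodMk h1 h2)))

/-- the master chain rule for the Lagrangian along the delayed trajectory -/
lemma lagAlong_hasDerivAt (hF : Differentiable ℝ (unc F)) (hq : ContDiff ℝ 2 q) (t : ℝ) :
    HasDerivAt (lagAlong F τ q)
      (dL1 F τ q t + ⟪dL2 F τ q t, deriv q t⟫ + ⟪dL3 F τ q t, deriv (deriv q) t⟫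
        + ⟪dL4 F τ q t, deriv q (t - τ)⟫ + ⟪dL5 F τ q t, deriv (deriv q) (t - τ)⟫) t := by
  have hc : HasDerivAt (lagAlong F τ q)
      (fderiv ℝ (unc F) (path τ q t)
        ((1 : ℝ), deriv q t, deriv (deriv q) t, deriv q (t - τ), deriv (deriv q) (t - τ))) t :=
    (hF (path τ q t)).hasFDerivAt.comp_hasDerivAt t (path_hasDerivAt hq t)
  convert hc using 1
  have hsplit : ((1 : ℝ), deriv q t, deriv (deriv q) t, deriv q (t - τ), deriv (deriv q) (t - τ))
      = ((1 : ℝ), (0 : Vec n), (0 : Vec n), (0 : Vec n), (0 : Vec n))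
        + ((0 : ℝ), deriv q t, (0 : Vec n), (0 : Vec n), (0 : Vec n))
        + ((0 : ℝ), (0 : Vec n), deriv (deriv q) t, (0 : Vec n), (0 : Vec n))
        + ((0 : ℝ), (0 : Vec n), (0 : Vec n), deriv q (t - τ), (0 : Vec n))
        + ((0 : ℝ), (0 : Vec n), (0 : Vec n), (0 : Vec n), deriv (deriv q) (t - τ)) := by
    simp [Prod.ext_iff]
  rw [hsplit, map_add, map_add, map_add, map_add,
    dL1_eq hF, dL2_inner hF, dL3_inner hF, dL4_inner hF, dL5_inner hF]

/-- differentiability of `t ↦ dL3 F τ q t` -/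
lemma dL3_differentiable (hF2 : ContDiff ℝ 2 (unc F)) (hq : ContDiff ℝ 2 q) :
    Differentiable ℝ (fun t => dL3 F τ q t) := by
  have hF : Differentiable ℝ (unc F) := hF2.differentiable (by norm_num)
  have heq : (fun t => dL3 F τ q t)
      = fun t => (toDual ℝ (Vec n)).symm ((fderiv ℝ (unc F) (path τ q t)).comp (J3 n)) :=
    funext fun t => dL3_formula hF t
  rw [heq]
  have hpath : Differentiable ℝ (path τ q) := fun t => (path_hasDerivAt hq t).differentiableAt
  have hfd : Differentiable ℝ (fun t => fderiv ℝ (unc F) (path τ q t)) := by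
    have : ContDiff ℝ 1 (fderiv ℝ (unc F)) := hF2.fderiv_right (by norm_num)
    exact (this.differentiable one_ne_zero).comp hpath
  have hcomp : Differentiable ℝ (fun t => (fderiv ℝ (unc F) (path τ q t)).comp (J3 n)) := by
    have hc : Differentiable ℝ
        (fun D : EE n →L[ℝ] ℝ => ((ContinuousLinearMap.compL ℝ (Vec n) (EE n) ℝ).flip (J3 n)) D) :=
      (ContinuousLinearMap.compL ℝ (Vec n) (EE n) ℝ).flip (J3 n) |>.differentiable
    exact hc.comp hfd
  exact ((toDual ℝ (Vec n)).symm.toContinuousLinearEquiv.toContinuousLinearMap.differentiable).comp hcomp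

lemma dL5_differentiable (hF2 : ContDiff ℝ 2 (unc F)) (hq : ContDiff ℝ 2 q) :
    Differentiable ℝ (fun t => dL5 F τ q t) := by
  have hF : Differentiable ℝ (unc F) := hF2.differentiable (by norm_num)
  have heq : (fun t => dL5 F τ q t)
      = fun t => (toDual ℝ (Vec n)).symm ((fderiv ℝ (unc F) (path τ q t)).comp (J5 n)) :=
    funext fun t => dL5_formula hF t
  rw [heq]
  have hpath : Differentiable ℝ (path τ q) := fun t => (path_hasDerivAt hq t).differentiableAt
  have hfd : Differentiable ℝ (fun t => fderiv ℝ (unc F) (path τ q t)) := by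
    have : ContDiff ℝ 1 (fderiv ℝ (unc F)) := hF2.fderiv_right (by norm_num)
    exact (this.differentiable one_ne_zero).comp hpath
  have hcomp : Differentiable ℝ (fun t => (fderiv ℝ (unc F) (path τ q t)).comp (J5 n)) := by
    have hc : Differentiable ℝ
        (fun D : EE n →L[ℝ] ℝ => ((ContinuousLinearMap.compL ℝ (Vec n) (EE n) ℝ).flip (J5 n)) D) :=
      (ContinuousLinearMap.compL ℝ (Vec n) (EE n) ℝ).flip (J5 n) |>.differentiable
    exact hc.comp hfd
  exact ((toDual ℝ (Vec n)).symm.toContinuousLinearEquiv.toContinuousLinearMap.differentiable).comp hcomp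

end master

/-- General DuBois–Reymond computation for a C² Lagrangian. -/
lemma main (t₁ t₂ τ : ℝ) (hτ : 0 < τ) (hτ' : τ < t₂ - t₁)
    (F : Lag n) (hF2 : ContDiff ℝ 2 (unc F))
    (q : ℝ → Vec n) (hq : ContDiff ℝ 2 q)
    (hEL1 : ∀ t ∈ Icc t₁ (t₂ - τ),
      deriv (fun s => dL3 F τ q s + dL5 F τ q (s + τ)) t
        = dL2 F τ q t + dL4 F τ q (t + τ))
    (hEL2 : ∀ t ∈ Icc (t₂ - τ) t₂,
      deriv (fun s => dL3 F τ q s) t = dL2 F τ q t)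
    (hcond : ∀ t ∈ Icc (t₁ - τ) (t₂ - τ),
      ⟪dL4 F τ q (t + τ), deriv q t⟫ + ⟪dL5 F τ q (t + τ), deriv (deriv q) t⟫ = 0) :
    (∀ t ∈ Icc t₁ (t₂ - τ),
      deriv (fun s => lagAlong F τ q s
          - ⟪deriv q s, dL3 F τ q s + dL5 F τ q (s + τ)⟫) t = dL1 F τ q t) ∧
    (∀ t ∈ Icc (t₂ - τ) t₂,
      deriv (fun s => lagAlong F τ q s - ⟪deriv q s, dL3 F τ q s⟫) t = dL1 F τ q t) := by
  have hF : Differentiable ℝ (unc F) := hF2.differentiable (by norm_num)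
  have hd3 := dL3_differentiable (τ := τ) (q := q) hF2 hq
  have hd5 := dL5_differentiable (τ := τ) (q := q) hF2 hq
  have hq'' : ∀ t : ℝ, HasDerivAt (deriv q) (deriv (deriv q) t) t :=
    fun t => (dq_diff hq t).hasDerivAt
  constructor
  · intro t ht
    have hp : DifferentiableAt ℝ (fun s => dL3 F τ q s + dL5 F τ q (s + τ)) t := by
      exact (hd3 t).add (DifferentiableAt.comp (g := fun s => dL5 F τ q s) (f := fun s => s + τ) t (hd5 (t + τ)) ((differentiable_fun_id.add_const τ) t))
    have hinner : HasDerivAt (fun s => ⟪deriv q s, dL3 F τ q s + dL5 F τ q (s + τ)⟫)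
        (⟪deriv q t, deriv (fun s => dL3 F τ q s + dL5 F τ q (s + τ)) t⟫
          + ⟪deriv (deriv q) t, dL3 F τ q t + dL5 F τ q (t + τ)⟫) t :=
      (hq'' t).inner ℝ hp.hasDerivAt
    have htotal := (lagAlong_hasDerivAt (τ := τ) hF hq t).fun_sub hinner
    rw [htotal.deriv, hEL1 t ht]
    have hc1 := hcond t ⟨by linarith [ht.1], ht.2⟩
    have hc2 := hcond (t - τ) ⟨by linarith [ht.1], by linarith [ht.2]⟩
    rw [sub_add_cancel] at hc2
    simp only [inner_add_right]
    linarith [hc1, hc2, real_inner_comm (dL2 F τ q t) (deriv q t),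
      real_inner_comm (dL3 F τ q t) (deriv (deriv q) t),
      real_inner_comm (dL4 F τ q (t + τ)) (deriv q t),
      real_inner_comm (dL5 F τ q (t + τ)) (deriv (deriv q) t)]
  · intro t ht
    have hp : DifferentiableAt ℝ (fun s => dL3 F τ q s) t := hd3 t
    have hinner : HasDerivAt (fun s => ⟪deriv q s, dL3 F τ q s⟫)
        (⟪deriv q t, deriv (fun s => dL3 F τ q s) t⟫
          + ⟪deriv (deriv q) t, dL3 F τ q t⟫) t :=
      (hq'' t).inner ℝ hp.hasDerivAt
    have htotal := (lagAlong_hasDerivAt (τ := τ) hF hq t).fun_sub hinner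
    rw [htotal.deriv, hEL2 t ht]
    have hc2 := hcond (t - τ) ⟨by linarith [ht.1], by linarith [ht.2]⟩
    rw [sub_add_cancel] at hc2
    linarith [hc2, real_inner_comm (dL2 F τ q t) (deriv q t),
      real_inner_comm (dL3 F τ q t) (deriv (deriv q) t)]

end Scratch

end Helper

/-- isoperimetric DuBois–Reymond necessary conditions with time delay
along a `C²` isoperimetric Euler–Lagrange extremal. -/
theorem isoperimetric_duBois_Reymond_with_time_delay
    {n : ℕ} (hn : 0 < n) (t₁ t₂ τ : ℝ) (ht : t₁ < t₂) (hτ : 0 < τ)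
    (hτ' : τ < t₂ - t₁) (L g : Lag n) (hL : LagC2 L) (hg : LagC2 g)
    (lam : ℝ) (q : ℝ → Vec n) (hq : ContDiff ℝ 2 q)
    (hEL : ELdelay (Aug L g lam) t₁ t₂ τ q)
    (hcond : ∀ t ∈ Icc (t₁ - τ) (t₂ - τ),
      ⟪dL4 (Aug L g lam) τ q (t + τ), deriv q t⟫
        + ⟪dL5 (Aug L g lam) τ q (t + τ), deriv (deriv q) t⟫ = 0) :
    (∀ t ∈ Icc t₁ (t₂ - τ),
      deriv (fun s => lagAlong (Aug L g lam) τ q s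
          - ⟪deriv q s, dL3 (Aug L g lam) τ q s + dL5 (Aug L g lam) τ q (s + τ)⟫) t
        = dL1 (Aug L g lam) τ q t) ∧
    (∀ t ∈ Icc (t₂ - τ) t₂,
      deriv (fun s => lagAlong (Aug L g lam) τ q s
          - ⟪deriv q s, dL3 (Aug L g lam) τ q s⟫) t
        = dL1 (Aug L g lam) τ q t) := by
  have hF2 : ContDiff ℝ 2 (Scratch.unc (Aug L g lam)) := by
    have h : ContDiff ℝ 2 (fun p : ℝ × Vec n × Vec n × Vec n × Vec n =>
        L p.1 p.2.1 p.2.2.1 p.2.2.2.1 p.2.2.2.2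
          - lam * g p.1 p.2.1 p.2.2.1 p.2.2.2.1 p.2.2.2.2) := hL.sub (contDiff_const.mul hg)
    exact h
  exact Scratch.main t₁ t₂ τ hτ hτ' (Aug L g lam) hF2 q hq hEL.1 hEL.2 hcond

end
end

section
/- Let q : [t₁−τ,t₂] → ℝⁿ be C² and let h : [t₁−τ,t₂] → ℝⁿ be C² with h(t) = 0 for all t ∈ [t₁−τ,t₁] and h(t) = 0 for all t ∈ [t₂−τ, t₂]. Then the function ε ↦ I^τ[q + εh] := ∫_{t₁}^{t₂} g(t, q(t)+εh(t), q̇(t)+εḣ(t), q(t−τ)+εh(t−τ), q̇(t−τ)+εḣ(t−τ)) dt is differentiable at ε = 0 and (d/dε)|_{ε=0} I^τ[q + εh] = ∫_{t₁}^{t₂−τ} [∂₂g[q]_τ(t) − d/dt ∂₃g[q]_τ(t) + ∂₄g[q]_τ(t+τ) − d/dt ∂₅g[q]_τ(t+τ)]·h(t) dt. -/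
open Set MeasureTheory RealInnerProductSpace

noncomputable section

namespace FVaux

open InnerProductSpace

abbrev XX (n : ℕ) := ℝ × Vec n × Vec n × Vec n × Vec n

def Gfun {n : ℕ} (g : Lag n) : XX n → ℝ := fun p => g p.1 p.2.1 p.2.2.1 p.2.2.2.1 p.2.2.2.2

def incl2 (n : ℕ) : Vec n →L[ℝ] XX n :=
  (0 : Vec n →L[ℝ] ℝ).prod ((ContinuousLinearMap.id ℝ (Vec n)).prod 0)
def incl3 (n : ℕ) : Vec n →L[ℝ] XX n :=
  (0 : Vec n →L[ℝ] ℝ).prod ((0 : Vec n →L[ℝ] Vec n).prod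
    ((ContinuousLinearMap.id ℝ (Vec n)).prod 0))
def incl4 (n : ℕ) : Vec n →L[ℝ] XX n :=
  (0 : Vec n →L[ℝ] ℝ).prod ((0 : Vec n →L[ℝ] Vec n).prod ((0 : Vec n →L[ℝ] Vec n).prod
    ((ContinuousLinearMap.id ℝ (Vec n)).prod 0)))
def incl5 (n : ℕ) : Vec n →L[ℝ] XX n :=
  (0 : Vec n →L[ℝ] ℝ).prod ((0 : Vec n →L[ℝ] Vec n).prod ((0 : Vec n →L[ℝ] Vec n).prod
    ((0 : Vec n →L[ℝ] Vec n).prod (ContinuousLinearMap.id ℝ (Vec n)))))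

lemma decomp {n : ℕ} (v2 v3 v4 v5 : Vec n) :
    (((0:ℝ), v2, v3, v4, v5) : XX n) = incl2 n v2 + incl3 n v3 + incl4 n v4 + incl5 n v5 := by
  simp [incl2, incl3, incl4, incl5, Prod.ext_iff]

/-- the curve `Ψ(t) = (t, q t, q' t, q(t-τ), q'(t-τ))`. -/
def Psi {n : ℕ} (τ : ℝ) (q : ℝ → Vec n) (t : ℝ) : XX n :=
  (t, q t, deriv q t, q (t - τ), deriv q (t - τ))

/-- `D g τ q i t` for i=2..5 : the partial gradients along the curve, in fderiv form. -/
def D2' {n : ℕ} (g : Lag n) (τ : ℝ) (q : ℝ → Vec n) (t : ℝ) : Vec n :=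
  (toDual ℝ (Vec n)).symm ((fderiv ℝ (Gfun g) (Psi τ q t)).comp (incl2 n))
def D3' {n : ℕ} (g : Lag n) (τ : ℝ) (q : ℝ → Vec n) (t : ℝ) : Vec n :=
  (toDual ℝ (Vec n)).symm ((fderiv ℝ (Gfun g) (Psi τ q t)).comp (incl3 n))
def D4' {n : ℕ} (g : Lag n) (τ : ℝ) (q : ℝ → Vec n) (t : ℝ) : Vec n :=
  (toDual ℝ (Vec n)).symm ((fderiv ℝ (Gfun g) (Psi τ q t)).comp (incl4 n))
def D5' {n : ℕ} (g : Lag n) (τ : ℝ) (q : ℝ → Vec n) (t : ℝ) : Vec n :=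
  (toDual ℝ (Vec n)).symm ((fderiv ℝ (Gfun g) (Psi τ q t)).comp (incl5 n))

section eqs
variable {n : ℕ} {g : Lag n} (hg : ContDiff ℝ 2 (Gfun g)) (τ : ℝ) (q : ℝ → Vec n) (t : ℝ)
include hg

lemma dL2_eq : dL2 g τ q t = D2' g τ q t := by
  have h1 : HasFDerivAt (fun y : Vec n => ((t, y, deriv q t, q (t-τ), deriv q (t-τ)) : XX n))
      (incl2 n) (q t) :=
    (hasFDerivAt_const t _).prodMk ((hasFDerivAt_id _).prodMk (hasFDerivAt_const _ _))
  have h2 : HasFDerivAt (fun y : Vec n => g t y (deriv q t) (q (t-τ)) (deriv q (t-τ)))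
      ((fderiv ℝ (Gfun g) (Psi τ q t)).comp (incl2 n)) (q t) :=
    ((hg.differentiable two_ne_zero) _).hasFDerivAt.comp _ h1
  rw [dL2, gradient, h2.fderiv]; rfl

lemma dL3_eq : dL3 g τ q t = D3' g τ q t := by
  have h1 : HasFDerivAt (fun v : Vec n => ((t, q t, v, q (t-τ), deriv q (t-τ)) : XX n))
      (incl3 n) (deriv q t) :=
    (hasFDerivAt_const t _).prodMk ((hasFDerivAt_const _ _).prodMk
      ((hasFDerivAt_id _).prodMk (hasFDerivAt_const _ _)))
  have h2 : HasFDerivAt (fun v : Vec n => g t (q t) v (q (t-τ)) (deriv q (t-τ)))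
      ((fderiv ℝ (Gfun g) (Psi τ q t)).comp (incl3 n)) (deriv q t) :=
    ((hg.differentiable two_ne_zero) _).hasFDerivAt.comp _ h1
  rw [dL3, gradient, h2.fderiv]; rfl

lemma dL4_eq : dL4 g τ q t = D4' g τ q t := by
  have h1 : HasFDerivAt (fun y : Vec n => ((t, q t, deriv q t, y, deriv q (t-τ)) : XX n))
      (incl4 n) (q (t-τ)) :=
    (hasFDerivAt_const t _).prodMk ((hasFDerivAt_const _ _).prodMk
      ((hasFDerivAt_const _ _).prodMk ((hasFDerivAt_id _).prodMk (hasFDerivAt_const _ _))))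
  have h2 : HasFDerivAt (fun y : Vec n => g t (q t) (deriv q t) y (deriv q (t-τ)))
      ((fderiv ℝ (Gfun g) (Psi τ q t)).comp (incl4 n)) (q (t-τ)) :=
    ((hg.differentiable two_ne_zero) _).hasFDerivAt.comp _ h1
  rw [dL4, gradient, h2.fderiv]; rfl

lemma dL5_eq : dL5 g τ q t = D5' g τ q t := by
  have h1 : HasFDerivAt (fun v : Vec n => ((t, q t, deriv q t, q (t-τ), v) : XX n))
      (incl5 n) (deriv q (t-τ)) :=
    (hasFDerivAt_const t _).prodMk ((hasFDerivAt_const _ _).prodMk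
      ((hasFDerivAt_const _ _).prodMk ((hasFDerivAt_const _ _).prodMk (hasFDerivAt_id _))))
  have h2 : HasFDerivAt (fun v : Vec n => g t (q t) (deriv q t) (q (t-τ)) v)
      ((fderiv ℝ (Gfun g) (Psi τ q t)).comp (incl5 n)) (deriv q (t-τ)) :=
    ((hg.differentiable two_ne_zero) _).hasFDerivAt.comp _ h1
  rw [dL5, gradient, h2.fderiv]; rfl

lemma inner_D2' (v : Vec n) : ⟪D2' g τ q t, v⟫ = fderiv ℝ (Gfun g) (Psi τ q t) (incl2 n v) := by
  rw [D2', toDual_symm_apply]; rfl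
lemma inner_D3' (v : Vec n) : ⟪D3' g τ q t, v⟫ = fderiv ℝ (Gfun g) (Psi τ q t) (incl3 n v) := by
  rw [D3', toDual_symm_apply]; rfl
lemma inner_D4' (v : Vec n) : ⟪D4' g τ q t, v⟫ = fderiv ℝ (Gfun g) (Psi τ q t) (incl4 n v) := by
  rw [D4', toDual_symm_apply]; rfl
lemma inner_D5' (v : Vec n) : ⟪D5' g τ q t, v⟫ = fderiv ℝ (Gfun g) (Psi τ q t) (incl5 n v) := by
  rw [D5', toDual_symm_apply]; rfl

end eqs

lemma contDiff_deriv_of2 {n : ℕ} {f : ℝ → Vec n} (hf : ContDiff ℝ 2 f) :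
    ContDiff ℝ 1 (deriv f) := by
  have h2 : (2 : WithTop ℕ∞) = 1 + 1 := by norm_num
  rw [h2, contDiff_succ_iff_deriv] at hf
  exact hf.2.2

lemma contDiff_fderivG {n : ℕ} {g : Lag n} (hg : ContDiff ℝ 2 (Gfun g)) :
    ContDiff ℝ 1 (fderiv ℝ (Gfun g)) := by
  have h2 : (2 : WithTop ℕ∞) = 1 + 1 := by norm_num
  rw [h2, contDiff_succ_iff_fderiv] at hg
  exact hg.2.2

lemma contDiff_Psi {n : ℕ} (τ : ℝ) {q : ℝ → Vec n} (hq : ContDiff ℝ 2 q) :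
    ContDiff ℝ 1 (Psi τ q) := by
  have hq1 : ContDiff ℝ 1 q := hq.of_le one_le_two
  have hq' : ContDiff ℝ 1 (deriv q) := contDiff_deriv_of2 hq
  have hsub : ContDiff ℝ 1 (fun t : ℝ => t - τ) := contDiff_id.sub contDiff_const
  exact contDiff_id.prodMk (hq1.prodMk (hq'.prodMk ((hq1.comp hsub).prodMk (hq'.comp hsub))))

lemma contDiff_Dgen {n : ℕ} {g : Lag n} (hg : ContDiff ℝ 2 (Gfun g)) (i : Vec n →L[ℝ] XX n) :
    ContDiff ℝ 1 (fun p : XX n => (toDual ℝ (Vec n)).symm ((fderiv ℝ (Gfun g) p).comp i)) :=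
  (toDual ℝ (Vec n)).symm.contDiff.comp
    ((((ContinuousLinearMap.compL ℝ (Vec n) (XX n) ℝ).flip i).contDiff).comp
      (contDiff_fderivG hg))

lemma contDiff_D2' {n : ℕ} {g : Lag n} (hg : ContDiff ℝ 2 (Gfun g)) (τ : ℝ)
    {q : ℝ → Vec n} (hq : ContDiff ℝ 2 q) : ContDiff ℝ 1 (D2' g τ q) :=
  (contDiff_Dgen hg (incl2 n)).comp (contDiff_Psi τ hq)
lemma contDiff_D3' {n : ℕ} {g : Lag n} (hg : ContDiff ℝ 2 (Gfun g)) (τ : ℝ)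
    {q : ℝ → Vec n} (hq : ContDiff ℝ 2 q) : ContDiff ℝ 1 (D3' g τ q) :=
  (contDiff_Dgen hg (incl3 n)).comp (contDiff_Psi τ hq)
lemma contDiff_D4' {n : ℕ} {g : Lag n} (hg : ContDiff ℝ 2 (Gfun g)) (τ : ℝ)
    {q : ℝ → Vec n} (hq : ContDiff ℝ 2 q) : ContDiff ℝ 1 (D4' g τ q) :=
  (contDiff_Dgen hg (incl4 n)).comp (contDiff_Psi τ hq)
lemma contDiff_D5' {n : ℕ} {g : Lag n} (hg : ContDiff ℝ 2 (Gfun g)) (τ : ℝ)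
    {q : ℝ → Vec n} (hq : ContDiff ℝ 2 q) : ContDiff ℝ 1 (D5' g τ q) :=
  (contDiff_Dgen hg (incl5 n)).comp (contDiff_Psi τ hq)

lemma deriv_zero_on {n : ℕ} (h : ℝ → Vec n) (a b : ℝ) (hz : ∀ t ∈ Icc a b, h t = 0)
    {t : ℝ} (ht : t ∈ Ioo a b) : deriv h t = 0 := by
  have he : h =ᶠ[nhds t] (fun _ => 0) :=
    Filter.eventuallyEq_of_mem (Ioo_mem_nhds ht.1 ht.2)
      (fun s hs => hz s (Ioo_subset_Icc_self hs))
  rw [he.deriv_eq]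
  simp

/-- pointwise derivative in ε -/
lemma hasDerivAt_pointwise {n : ℕ} {g : Lag n} (hg : ContDiff ℝ 2 (Gfun g))
    (q h : ℝ → Vec n) (τ t x : ℝ) :
    HasDerivAt (fun ε : ℝ => g t (q t + ε • h t) (deriv q t + ε • deriv h t)
        (q (t - τ) + ε • h (t - τ)) (deriv q (t - τ) + ε • deriv h (t - τ)))
      (fderiv ℝ (Gfun g)
        (t, q t + x • h t, deriv q t + x • deriv h t,
          q (t - τ) + x • h (t - τ), deriv q (t - τ) + x • deriv h (t - τ))
        (((0:ℝ), h t, deriv h t, h (t - τ), deriv h (t - τ)) : XX n)) x := by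
  have hc : ∀ (a v : Vec n), HasDerivAt (fun ε : ℝ => a + ε • v) v x := by
    intro a v
    simpa using ((hasDerivAt_id x).smul_const v).const_add a
  have hΦ : HasDerivAt (fun ε : ℝ =>
      ((t, q t + ε • h t, deriv q t + ε • deriv h t,
        q (t - τ) + ε • h (t - τ), deriv q (t - τ) + ε • deriv h (t - τ)) : XX n))
      (((0:ℝ), h t, deriv h t, h (t - τ), deriv h (t - τ)) : XX n) x :=
    (hasDerivAt_const x t).prodMk ((hc _ _).prodMk ((hc _ _).prodMk ((hc _ _).prodMk (hc _ _))))
  exact (((hg.differentiable two_ne_zero) _).hasFDerivAt).comp_hasDerivAt x hΦ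

end FVaux

/-- first variation of the delayed functional `I^τ` for variations
vanishing on `[t₁-τ, t₁]` and on `[t₂-τ, t₂]`. -/
theorem first_variation_with_time_delay_first_interval
    {n : ℕ} (hn : 0 < n) (t₁ t₂ τ : ℝ) (ht : t₁ < t₂) (hτ : 0 < τ)
    (hτ' : τ < t₂ - t₁) (g : Lag n) (hg : LagC2 g)
    (q : ℝ → Vec n) (hq : ContDiff ℝ 2 q)
    (h : ℝ → Vec n) (hh : ContDiff ℝ 2 h)
    (hh₁ : ∀ t ∈ Icc (t₁ - τ) t₁, h t = 0)
    (hh₂ : ∀ t ∈ Icc (t₂ - τ) t₂, h t = 0) :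
    HasDerivAt (fun ε : ℝ => ∫ t in t₁..t₂,
        g t (q t + ε • h t) (deriv q t + ε • deriv h t)
          (q (t - τ) + ε • h (t - τ)) (deriv q (t - τ) + ε • deriv h (t - τ)))
      (∫ t in t₁..(t₂ - τ),
        ⟪dL2 g τ q t - deriv (fun s => dL3 g τ q s) t
          + dL4 g τ q (t + τ) - deriv (fun s => dL5 g τ q (s + τ)) t, h t⟫)
      0 := by
  have hG : ContDiff ℝ 2 (FVaux.Gfun g) := hg
  have hqc : Continuous q := hq.continuous
  have hq'c : Continuous (deriv q) := (FVaux.contDiff_deriv_of2 hq).continuous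
  have hhc : Continuous h := hh.continuous
  have hh'c : Continuous (deriv h) := (FVaux.contDiff_deriv_of2 hh).continuous
  have hsubc : Continuous fun t : ℝ => t - τ := continuous_id.sub continuous_const
  have haddc : Continuous fun t : ℝ => t + τ := continuous_id.add continuous_const
  have ht2 : t₂ - τ < t₂ := by linarith
  have hB1 : h t₁ = 0 := hh₁ t₁ ⟨by linarith, le_refl t₁⟩
  have hB2 : h (t₂ - τ) = 0 := hh₂ (t₂ - τ) ⟨le_refl _, by linarith⟩
  set F' : ℝ → ℝ → ℝ := fun x t =>
    fderiv ℝ (FVaux.Gfun g)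
      (t, q t + x • h t, deriv q t + x • deriv h t,
        q (t - τ) + x • h (t - τ), deriv q (t - τ) + x • deriv h (t - τ))
      (((0:ℝ), h t, deriv h t, h (t - τ), deriv h (t - τ)) : FVaux.XX n) with hF'
  -- continuity of F'
  have hΦc : Continuous fun p : ℝ × ℝ =>
      ((p.2, q p.2 + p.1 • h p.2, deriv q p.2 + p.1 • deriv h p.2,
        q (p.2 - τ) + p.1 • h (p.2 - τ),
        deriv q (p.2 - τ) + p.1 • deriv h (p.2 - τ)) : FVaux.XX n) := by
    refine continuous_snd.prodMk (Continuous.prodMk ?_ (Continuous.prodMk ?_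
      (Continuous.prodMk ?_ ?_)))
    · exact (hqc.comp continuous_snd).add (continuous_fst.smul (hhc.comp continuous_snd))
    · exact (hq'c.comp continuous_snd).add (continuous_fst.smul (hh'c.comp continuous_snd))
    · exact ((hqc.comp hsubc).comp continuous_snd).add
        (continuous_fst.smul ((hhc.comp hsubc).comp continuous_snd))
    · exact ((hq'c.comp hsubc).comp continuous_snd).add
        (continuous_fst.smul ((hh'c.comp hsubc).comp continuous_snd))
  have hHvc : Continuous fun t : ℝ =>
      (((0:ℝ), h t, deriv h t, h (t - τ), deriv h (t - τ)) : FVaux.XX n) :=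
    continuous_const.prodMk (hhc.prodMk (hh'c.prodMk
      ((hhc.comp hsubc).prodMk (hh'c.comp hsubc))))
  have hF'c : Continuous fun p : ℝ × ℝ => F' p.1 p.2 := by
    rw [hF']
    exact Continuous.clm_apply ((hG.continuous_fderiv two_ne_zero).comp hΦc)
      (hHvc.comp continuous_snd)
  have hFxc : ∀ x : ℝ, Continuous fun t => g t (q t + x • h t) (deriv q t + x • deriv h t)
      (q (t - τ) + x • h (t - τ)) (deriv q (t - τ) + x • deriv h (t - τ)) := by
    intro x
    exact hG.continuous.comp (hΦc.comp (Continuous.prodMk_right x))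
  obtain ⟨C, hC⟩ := (isCompact_Icc.prod isCompact_uIcc :
      IsCompact (Icc (-1:ℝ) 1 ×ˢ uIcc t₁ t₂)).exists_bound_of_continuousOn hF'c.continuousOn
  have key := intervalIntegral.hasDerivAt_integral_of_dominated_loc_of_deriv_le
    (F := fun x t => g t (q t + x • h t) (deriv q t + x • deriv h t)
        (q (t - τ) + x • h (t - τ)) (deriv q (t - τ) + x • deriv h (t - τ)))
    (F' := F') (x₀ := (0:ℝ)) (bound := fun _ => C) (a := t₁) (b := t₂) (μ := volume)
    (Metric.ball_mem_nhds (0:ℝ) one_pos)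
    (Filter.Eventually.of_forall fun x => (hFxc x).aestronglyMeasurable)
    ((hFxc 0).intervalIntegrable t₁ t₂)
    ((hF'c.comp (Continuous.prodMk_right (0:ℝ))).aestronglyMeasurable)
    (Filter.Eventually.of_forall fun t ht' x hx => by
      have hx' : x ∈ Icc (-1:ℝ) 1 := by
        rw [Real.ball_eq_Ioo] at hx
        exact ⟨by linarith [hx.1], le_of_lt (by linarith [hx.2])⟩
      exact hC (x, t) ⟨hx', Set.Ioc_subset_Icc_self ht'⟩)
    intervalIntegrable_const
    (Filter.Eventually.of_forall fun t ht' x hx => FVaux.hasDerivAt_pointwise hG q h τ t x)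
  -- the derivative-gradient functions
  have hD2c : Continuous (FVaux.D2' g τ q) := (FVaux.contDiff_D2' hG τ hq).continuous
  have hD3d : ContDiff ℝ 1 (FVaux.D3' g τ q) := FVaux.contDiff_D3' hG τ hq
  have hD3c : Continuous (FVaux.D3' g τ q) := hD3d.continuous
  have hD3'c : Continuous (deriv (FVaux.D3' g τ q)) := (contDiff_one_iff_deriv.mp hD3d).2
  have hD4c : Continuous (FVaux.D4' g τ q) := (FVaux.contDiff_D4' hG τ hq).continuous
  have hD5c : Continuous (FVaux.D5' g τ q) := (FVaux.contDiff_D5' hG τ hq).continuous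
  have hD5sd : ContDiff ℝ 1 (fun s => FVaux.D5' g τ q (s + τ)) :=
    (FVaux.contDiff_D5' hG τ hq).comp (contDiff_id.add contDiff_const)
  have hD5s'c : Continuous (deriv (fun s => FVaux.D5' g τ q (s + τ))) :=
    (contDiff_one_iff_deriv.mp hD5sd).2
  -- continuity of the integrands
  have hI1c : Continuous fun t => ⟪FVaux.D2' g τ q t, h t⟫ := hD2c.inner hhc
  have hI2c : Continuous fun t => ⟪FVaux.D3' g τ q t, deriv h t⟫ := hD3c.inner hh'c
  have hI3c : Continuous fun t => ⟪deriv (FVaux.D3' g τ q) t, h t⟫ := hD3'c.inner hhc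
  have hI4c : Continuous fun t => ⟪FVaux.D4' g τ q (t + τ), h t⟫ := (hD4c.comp haddc).inner hhc
  have hI5c : Continuous fun t => ⟪FVaux.D5' g τ q (t + τ), deriv h t⟫ :=
    (hD5c.comp haddc).inner hh'c
  have hI6c : Continuous fun t => ⟪deriv (fun s => FVaux.D5' g τ q (s + τ)) t, h t⟫ :=
    hD5s'c.inner hhc
  have hAc : Continuous fun t => ⟪FVaux.D2' g τ q t, h t⟫ + ⟪FVaux.D3' g τ q t, deriv h t⟫ :=
    hI1c.add hI2c
  have hBc : Continuous fun t =>
      ⟪FVaux.D4' g τ q t, h (t - τ)⟫ + ⟪FVaux.D5' g τ q t, deriv h (t - τ)⟫ :=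
    (hD4c.inner (hhc.comp hsubc)).add (hD5c.inner (hh'c.comp hsubc))
  have hBsc : Continuous fun s =>
      ⟪FVaux.D4' g τ q (s + τ), h s⟫ + ⟪FVaux.D5' g τ q (s + τ), deriv h s⟫ :=
    hI4c.add hI5c
  -- pointwise identification of F' 0
  have hsplit : ∀ t : ℝ, F' 0 t =
      (⟪FVaux.D2' g τ q t, h t⟫ + ⟪FVaux.D3' g τ q t, deriv h t⟫)
      + (⟪FVaux.D4' g τ q t, h (t - τ)⟫ + ⟪FVaux.D5' g τ q t, deriv h (t - τ)⟫) := by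
    intro t
    have h0 : ((t, q t + (0:ℝ) • h t, deriv q t + (0:ℝ) • deriv h t,
        q (t - τ) + (0:ℝ) • h (t - τ), deriv q (t - τ) + (0:ℝ) • deriv h (t - τ)) : FVaux.XX n)
        = FVaux.Psi τ q t := by simp [FVaux.Psi]
    simp only [hF']
    rw [h0, FVaux.decomp, map_add, map_add, map_add,
      ← FVaux.inner_D2' hG τ q t (h t), ← FVaux.inner_D3' hG τ q t (deriv h t),
      ← FVaux.inner_D4' hG τ q t (h (t - τ)), ← FVaux.inner_D5' hG τ q t (deriv h (t - τ))]
    ring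
  -- a.e. vanishing pieces
  have hne₂ : ∀ᵐ (t : ℝ) ∂(volume : Measure ℝ), t ≠ t₂ := by
    rw [MeasureTheory.ae_iff]
    simp only [not_not, Set.setOf_eq_eq_singleton]
    exact measure_singleton t₂
  have hne₁ : ∀ᵐ (t : ℝ) ∂(volume : Measure ℝ), t ≠ t₁ := by
    rw [MeasureTheory.ae_iff]
    simp only [not_not, Set.setOf_eq_eq_singleton]
    exact measure_singleton t₁
  have hA2 : (∫ t in (t₂ - τ)..t₂,
      (⟪FVaux.D2' g τ q t, h t⟫ + ⟪FVaux.D3' g τ q t, deriv h t⟫)) = 0 := by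
    have hae : ∀ᵐ (t : ℝ) ∂(volume : Measure ℝ), t ∈ Set.uIoc (t₂ - τ) t₂ →
        (⟪FVaux.D2' g τ q t, h t⟫ + ⟪FVaux.D3' g τ q t, deriv h t⟫) = (0:ℝ) := by
      filter_upwards [hne₂] with t htne ht'
      rw [Set.uIoc_of_le (le_of_lt ht2)] at ht'
      have h1 : h t = 0 := hh₂ t ⟨le_of_lt ht'.1, ht'.2⟩
      have h2 : deriv h t = 0 :=
        FVaux.deriv_zero_on h _ _ hh₂ ⟨ht'.1, lt_of_le_of_ne ht'.2 htne⟩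
      simp [h1, h2]
    calc (∫ t in (t₂ - τ)..t₂,
        (⟪FVaux.D2' g τ q t, h t⟫ + ⟪FVaux.D3' g τ q t, deriv h t⟫))
        = ∫ _t in (t₂ - τ)..t₂, (0:ℝ) := intervalIntegral.integral_congr_ae hae
      _ = 0 := by simp
  have hBs0 : (∫ s in (t₁ - τ)..t₁,
      (⟪FVaux.D4' g τ q (s + τ), h s⟫ + ⟪FVaux.D5' g τ q (s + τ), deriv h s⟫)) = 0 := by
    have hae : ∀ᵐ (s : ℝ) ∂(volume : Measure ℝ), s ∈ Set.uIoc (t₁ - τ) t₁ →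
        (⟪FVaux.D4' g τ q (s + τ), h s⟫ + ⟪FVaux.D5' g τ q (s + τ), deriv h s⟫) = (0:ℝ) := by
      filter_upwards [hne₁] with s hsne hs'
      rw [Set.uIoc_of_le (by linarith : t₁ - τ ≤ t₁)] at hs'
      have h1 : h s = 0 := hh₁ s ⟨le_of_lt hs'.1, hs'.2⟩
      have h2 : deriv h s = 0 :=
        FVaux.deriv_zero_on h _ _ hh₁ ⟨hs'.1, lt_of_le_of_ne hs'.2 hsne⟩
      simp [h1, h2]
    calc (∫ s in (t₁ - τ)..t₁,
        (⟪FVaux.D4' g τ q (s + τ), h s⟫ + ⟪FVaux.D5' g τ q (s + τ), deriv h s⟫))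
        = ∫ _s in (t₁ - τ)..t₁, (0:ℝ) := intervalIntegral.integral_congr_ae hae
      _ = 0 := by simp
  -- integration by parts
  have hIBP3 : (∫ t in t₁..(t₂ - τ), ⟪FVaux.D3' g τ q t, deriv h t⟫)
      + (∫ t in t₁..(t₂ - τ), ⟪deriv (FVaux.D3' g τ q) t, h t⟫) = 0 := by
    rw [← intervalIntegral.integral_add (hI2c.intervalIntegrable _ _)
      (hI3c.intervalIntegrable _ _)]
    rw [intervalIntegral.integral_eq_sub_of_hasDerivAt
      (f := fun t => ⟪FVaux.D3' g τ q t, h t⟫)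
      (fun t _ => HasDerivAt.inner ℝ ((hD3d.differentiable one_ne_zero t).hasDerivAt)
        ((hh.differentiable two_ne_zero t).hasDerivAt))
      ((hI2c.add hI3c).intervalIntegrable _ _)]
    simp [hB1, hB2]
  have hIBP5 : (∫ t in t₁..(t₂ - τ), ⟪FVaux.D5' g τ q (t + τ), deriv h t⟫)
      + (∫ t in t₁..(t₂ - τ), ⟪deriv (fun s => FVaux.D5' g τ q (s + τ)) t, h t⟫) = 0 := by
    rw [← intervalIntegral.integral_add (hI5c.intervalIntegrable _ _)
      (hI6c.intervalIntegrable _ _)]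
    rw [intervalIntegral.integral_eq_sub_of_hasDerivAt
      (f := fun t => ⟪FVaux.D5' g τ q (t + τ), h t⟫)
      (fun t _ => HasDerivAt.inner ℝ ((hD5sd.differentiable one_ne_zero t).hasDerivAt)
        ((hh.differentiable two_ne_zero t).hasDerivAt))
      ((hI5c.add hI6c).intervalIntegrable _ _)]
    simp [hB1, hB2]
  -- splitting the integrals
  have hsplitA : (∫ t in t₁..(t₂ - τ),
        (⟪FVaux.D2' g τ q t, h t⟫ + ⟪FVaux.D3' g τ q t, deriv h t⟫))
      + (∫ t in (t₂ - τ)..t₂,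
        (⟪FVaux.D2' g τ q t, h t⟫ + ⟪FVaux.D3' g τ q t, deriv h t⟫))
      = ∫ t in t₁..t₂, (⟪FVaux.D2' g τ q t, h t⟫ + ⟪FVaux.D3' g τ q t, deriv h t⟫) :=
    intervalIntegral.integral_add_adjacent_intervals
      (hAc.intervalIntegrable _ _) (hAc.intervalIntegrable _ _)
  have hsplitB : (∫ s in (t₁ - τ)..t₁,
        (⟪FVaux.D4' g τ q (s + τ), h s⟫ + ⟪FVaux.D5' g τ q (s + τ), deriv h s⟫))
      + (∫ s in t₁..(t₂ - τ),
        (⟪FVaux.D4' g τ q (s + τ), h s⟫ + ⟪FVaux.D5' g τ q (s + τ), deriv h s⟫))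
      = ∫ s in (t₁ - τ)..(t₂ - τ),
        (⟪FVaux.D4' g τ q (s + τ), h s⟫ + ⟪FVaux.D5' g τ q (s + τ), deriv h s⟫) :=
    intervalIntegral.integral_add_adjacent_intervals
      (hBsc.intervalIntegrable _ _) (hBsc.intervalIntegrable _ _)
  have hshift : (∫ t in t₁..t₂,
        (⟪FVaux.D4' g τ q t, h (t - τ)⟫ + ⟪FVaux.D5' g τ q t, deriv h (t - τ)⟫))
      = ∫ s in (t₁ - τ)..(t₂ - τ),
        (⟪FVaux.D4' g τ q (s + τ), h s⟫ + ⟪FVaux.D5' g τ q (s + τ), deriv h s⟫) := by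
    rw [← intervalIntegral.integral_comp_sub_right
      (fun s => ⟪FVaux.D4' g τ q (s + τ), h s⟫ + ⟪FVaux.D5' g τ q (s + τ), deriv h s⟫) τ]
    simp [sub_add_cancel]
  -- identify the target integrand
  have e3 : (fun s => dL3 g τ q s) = FVaux.D3' g τ q := funext fun s => FVaux.dL3_eq hG τ q s
  have e5 : (fun s => dL5 g τ q (s + τ)) = fun s => FVaux.D5' g τ q (s + τ) :=
    funext fun s => FVaux.dL5_eq hG τ q (s + τ)
  have eT : ∀ t : ℝ, ⟪dL2 g τ q t - deriv (fun s => dL3 g τ q s) t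
      + dL4 g τ q (t + τ) - deriv (fun s => dL5 g τ q (s + τ)) t, h t⟫
      = (⟪FVaux.D2' g τ q t, h t⟫ - ⟪deriv (FVaux.D3' g τ q) t, h t⟫)
        + (⟪FVaux.D4' g τ q (t + τ), h t⟫
          - ⟪deriv (fun s => FVaux.D5' g τ q (s + τ)) t, h t⟫) := by
    intro t
    rw [e3, e5, FVaux.dL2_eq hG τ q t, FVaux.dL4_eq hG τ q (t + τ)]
    rw [sub_eq_add_neg, sub_eq_add_neg, inner_add_left, inner_add_left, inner_add_left,
      inner_neg_left, inner_neg_left]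
    ring
  -- target integral split
  have hT : (∫ t in t₁..(t₂ - τ),
      ⟪dL2 g τ q t - deriv (fun s => dL3 g τ q s) t
        + dL4 g τ q (t + τ) - deriv (fun s => dL5 g τ q (s + τ)) t, h t⟫)
      = ((∫ t in t₁..(t₂ - τ), ⟪FVaux.D2' g τ q t, h t⟫)
          - ∫ t in t₁..(t₂ - τ), ⟪deriv (FVaux.D3' g τ q) t, h t⟫)
        + ((∫ t in t₁..(t₂ - τ), ⟪FVaux.D4' g τ q (t + τ), h t⟫)
          - ∫ t in t₁..(t₂ - τ), ⟪deriv (fun s => FVaux.D5' g τ q (s + τ)) t, h t⟫) := by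
    rw [intervalIntegral.integral_congr (g := fun t =>
      (⟪FVaux.D2' g τ q t, h t⟫ - ⟪deriv (FVaux.D3' g τ q) t, h t⟫)
        + (⟪FVaux.D4' g τ q (t + τ), h t⟫
          - ⟪deriv (fun s => FVaux.D5' g τ q (s + τ)) t, h t⟫)) (fun t _ => eT t)]
    rw [intervalIntegral.integral_add ((hI1c.fun_sub hI3c).intervalIntegrable _ _)
      ((hI4c.fun_sub hI6c).intervalIntegrable _ _),
      intervalIntegral.integral_sub (hI1c.intervalIntegrable _ _)
        (hI3c.intervalIntegrable _ _),
      intervalIntegral.integral_sub (hI4c.intervalIntegrable _ _)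
        (hI6c.intervalIntegrable _ _)]
  -- full value computation
  have hfull : (∫ t in t₁..t₂, F' 0 t)
      = (∫ t in t₁..(t₂ - τ),
          (⟪FVaux.D2' g τ q t, h t⟫ + ⟪FVaux.D3' g τ q t, deriv h t⟫))
        + ∫ s in t₁..(t₂ - τ),
          (⟪FVaux.D4' g τ q (s + τ), h s⟫ + ⟪FVaux.D5' g τ q (s + τ), deriv h s⟫) := by
    calc (∫ t in t₁..t₂, F' 0 t)
        = ∫ t in t₁..t₂,
          ((⟪FVaux.D2' g τ q t, h t⟫ + ⟪FVaux.D3' g τ q t, deriv h t⟫)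
            + (⟪FVaux.D4' g τ q t, h (t - τ)⟫ + ⟪FVaux.D5' g τ q t, deriv h (t - τ)⟫)) :=
        intervalIntegral.integral_congr (fun t _ => hsplit t)
      _ = (∫ t in t₁..t₂, (⟪FVaux.D2' g τ q t, h t⟫ + ⟪FVaux.D3' g τ q t, deriv h t⟫))
          + ∫ t in t₁..t₂,
            (⟪FVaux.D4' g τ q t, h (t - τ)⟫ + ⟪FVaux.D5' g τ q t, deriv h (t - τ)⟫) :=
        intervalIntegral.integral_add (hAc.intervalIntegrable _ _)
          (hBc.intervalIntegrable _ _)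
      _ = (∫ t in t₁..(t₂ - τ),
            (⟪FVaux.D2' g τ q t, h t⟫ + ⟪FVaux.D3' g τ q t, deriv h t⟫))
          + ∫ s in t₁..(t₂ - τ),
            (⟪FVaux.D4' g τ q (s + τ), h s⟫ + ⟪FVaux.D5' g τ q (s + τ), deriv h s⟫) := by
        rw [← hsplitA, hA2, hshift, ← hsplitB, hBs0]
        ring
  have hval : (∫ t in t₁..t₂, F' 0 t)
      = ∫ t in t₁..(t₂ - τ),
          ⟪dL2 g τ q t - deriv (fun s => dL3 g τ q s) t
            + dL4 g τ q (t + τ) - deriv (fun s => dL5 g τ q (s + τ)) t, h t⟫ := by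
    rw [hfull, hT]
    rw [intervalIntegral.integral_add (hI1c.intervalIntegrable _ _)
      (hI2c.intervalIntegrable _ _),
      intervalIntegral.integral_add (hI4c.intervalIntegrable _ _)
      (hI5c.intervalIntegrable _ _)]
    linarith [hIBP3, hIBP5]
  exact hval ▸ key.2

end
end

section
/- Let q : [t₁−τ,t₂] → ℝⁿ be C² and let h : [t₁−τ,t₂] → ℝⁿ be C² with h(t) = 0 for all t ∈ [t₁−τ,t₁], h(t) = 0 for all t ∈ [t₁, t₂−τ], and h(t₂) = 0. Then the function ε ↦ I^τ[q + εh] := ∫_{t₁}^{t₂} g(t, q(t)+εh(t), q̇(t)+εḣ(t), q(t−τ)+εh(t−τ), q̇(t−τ)+εḣ(t−τ)) dt is differentiable at ε = 0 and (d/dε)|_{ε=0} I^τ[q + εh] = ∫_{t₂−τ}^{t₂} [∂₂g[q]_τ(t) − d/dt ∂₃g[q]_τ(t)]·h(t) dt. -/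
open Set MeasureTheory RealInnerProductSpace

noncomputable section

/-! ### Auxiliary material for the proof of the first variation formula -/

namespace FVaux

/-- The total space of arguments of a Lagrangian. -/
abbrev EE (n : ℕ) := ℝ × Vec n × Vec n × Vec n × Vec n

variable {n : ℕ}

/-- Inclusion of the second coordinate. -/
def ι₂ (n : ℕ) : Vec n →L[ℝ] EE n :=
  (0 : Vec n →L[ℝ] ℝ).prod ((ContinuousLinearMap.id ℝ (Vec n)).prod 0)

/-- Inclusion of the third coordinate. -/
def ι₃ (n : ℕ) : Vec n →L[ℝ] EE n :=
  (0 : Vec n →L[ℝ] ℝ).prod ((0 : Vec n →L[ℝ] Vec n).prod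
    ((ContinuousLinearMap.id ℝ (Vec n)).prod 0))

/-- Inclusion of the fourth coordinate. -/
def ι₄ (n : ℕ) : Vec n →L[ℝ] EE n :=
  (0 : Vec n →L[ℝ] ℝ).prod ((0 : Vec n →L[ℝ] Vec n).prod
    ((0 : Vec n →L[ℝ] Vec n).prod ((ContinuousLinearMap.id ℝ (Vec n)).prod 0)))

/-- Inclusion of the fifth coordinate. -/
def ι₅ (n : ℕ) : Vec n →L[ℝ] EE n :=
  (0 : Vec n →L[ℝ] ℝ).prod ((0 : Vec n →L[ℝ] Vec n).prod
    ((0 : Vec n →L[ℝ] Vec n).prod ((0 : Vec n →L[ℝ] Vec n).prod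
      (ContinuousLinearMap.id ℝ (Vec n)))))

lemma ι₂_apply (v : Vec n) :
    ι₂ n v = ((0 : ℝ), v, (0 : Vec n), (0 : Vec n), (0 : Vec n)) := rfl

lemma ι₃_apply (v : Vec n) :
    ι₃ n v = ((0 : ℝ), (0 : Vec n), v, (0 : Vec n), (0 : Vec n)) := rfl

lemma ι₄_apply (v : Vec n) :
    ι₄ n v = ((0 : ℝ), (0 : Vec n), (0 : Vec n), v, (0 : Vec n)) := rfl

lemma ι₅_apply (v : Vec n) :
    ι₅ n v = ((0 : ℝ), (0 : Vec n), (0 : Vec n), (0 : Vec n), v) := rfl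

lemma hasFDerivAt_mk2 (t : ℝ) (a b c x : Vec n) :
    HasFDerivAt (fun y : Vec n => ((t, y, a, b, c) : EE n)) (ι₂ n) x :=
  HasFDerivAt.prodMk (hasFDerivAt_const t x) (HasFDerivAt.prodMk (hasFDerivAt_id x)
    (hasFDerivAt_const ((a, b, c) : Vec n × Vec n × Vec n) x))

lemma hasFDerivAt_mk3 (t : ℝ) (a b c x : Vec n) :
    HasFDerivAt (fun y : Vec n => ((t, a, y, b, c) : EE n)) (ι₃ n) x :=
  HasFDerivAt.prodMk (hasFDerivAt_const t x) (HasFDerivAt.prodMk (hasFDerivAt_const a x)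
    (HasFDerivAt.prodMk (hasFDerivAt_id x) (hasFDerivAt_const ((b, c) : Vec n × Vec n) x)))

lemma hasFDerivAt_mk4 (t : ℝ) (a b c x : Vec n) :
    HasFDerivAt (fun y : Vec n => ((t, a, b, y, c) : EE n)) (ι₄ n) x :=
  HasFDerivAt.prodMk (hasFDerivAt_const t x) (HasFDerivAt.prodMk (hasFDerivAt_const a x)
    (HasFDerivAt.prodMk (hasFDerivAt_const b x) (HasFDerivAt.prodMk (hasFDerivAt_id x) (hasFDerivAt_const c x))))

lemma hasFDerivAt_mk5 (t : ℝ) (a b c x : Vec n) :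
    HasFDerivAt (fun y : Vec n => ((t, a, b, c, y) : EE n)) (ι₅ n) x :=
  HasFDerivAt.prodMk (hasFDerivAt_const t x) (HasFDerivAt.prodMk (hasFDerivAt_const a x)
    (HasFDerivAt.prodMk (hasFDerivAt_const b x) (HasFDerivAt.prodMk (hasFDerivAt_const c x) (hasFDerivAt_id x))))

section gradientFormulas

variable (g : Lag n) (τ : ℝ) (q : ℝ → Vec n)

/-- The Lagrangian as a function on the total space. -/
def GG (g : Lag n) : EE n → ℝ := fun p => g p.1 p.2.1 p.2.2.1 p.2.2.2.1 p.2.2.2.2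

/-- The delayed trajectory in the total space. -/
def PP (q : ℝ → Vec n) (τ : ℝ) : ℝ → EE n :=
  fun t => (t, q t, deriv q t, q (t - τ), deriv q (t - τ))

lemma dL2_eq_s11 (hGd : Differentiable ℝ (GG g)) (t : ℝ) :
    dL2 g τ q t = (InnerProductSpace.toDual ℝ (Vec n)).symm
      ((fderiv ℝ (GG g) (PP q τ t)).comp (ι₂ n)) := by
  unfold dL2 gradient
  congr 1
  exact ((hGd (PP q τ t)).hasFDerivAt.comp (q t)
    (hasFDerivAt_mk2 t (deriv q t) (q (t - τ)) (deriv q (t - τ)) (q t))).fderiv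

lemma dL3_eq_s11 (hGd : Differentiable ℝ (GG g)) (t : ℝ) :
    dL3 g τ q t = (InnerProductSpace.toDual ℝ (Vec n)).symm
      ((fderiv ℝ (GG g) (PP q τ t)).comp (ι₃ n)) := by
  unfold dL3 gradient
  congr 1
  exact ((hGd (PP q τ t)).hasFDerivAt.comp (deriv q t)
    (hasFDerivAt_mk3 t (q t) (q (t - τ)) (deriv q (t - τ)) (deriv q t))).fderiv

lemma dL4_eq_s11 (hGd : Differentiable ℝ (GG g)) (t : ℝ) :
    dL4 g τ q t = (InnerProductSpace.toDual ℝ (Vec n)).symm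
      ((fderiv ℝ (GG g) (PP q τ t)).comp (ι₄ n)) := by
  unfold dL4 gradient
  congr 1
  exact ((hGd (PP q τ t)).hasFDerivAt.comp (q (t - τ))
    (hasFDerivAt_mk4 t (q t) (deriv q t) (deriv q (t - τ)) (q (t - τ)))).fderiv

lemma dL5_eq_s11 (hGd : Differentiable ℝ (GG g)) (t : ℝ) :
    dL5 g τ q t = (InnerProductSpace.toDual ℝ (Vec n)).symm
      ((fderiv ℝ (GG g) (PP q τ t)).comp (ι₅ n)) := by
  unfold dL5 gradient
  congr 1
  exact ((hGd (PP q τ t)).hasFDerivAt.comp (deriv q (t - τ))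
    (hasFDerivAt_mk5 t (q t) (deriv q t) (q (t - τ)) (deriv q (t - τ)))).fderiv

lemma two_eq : (2 : WithTop ℕ∞) = 1 + 1 := by norm_num

lemma deriv_contDiff {f : ℝ → Vec n} (hf : ContDiff ℝ 2 f) : ContDiff ℝ 1 (deriv f) :=
  (contDiff_succ_iff_deriv.mp (two_eq ▸ hf)).2.2

lemma PP_contDiff (hq : ContDiff ℝ 2 q) : ContDiff ℝ 1 (PP q τ) := by
  have hq1 : ContDiff ℝ 1 q := hq.of_le (by norm_num)
  have hq' : ContDiff ℝ 1 (deriv q) := deriv_contDiff hq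
  have hshift : ContDiff ℝ 1 (fun t : ℝ => t - τ) := contDiff_id.sub contDiff_const
  exact contDiff_id.prodMk (hq1.prodMk (hq'.prodMk ((hq1.comp hshift).prodMk (hq'.comp hshift))))

lemma comp_smooth (hG : ContDiff ℝ 2 (GG g)) (hq : ContDiff ℝ 2 q)
    (ι : Vec n →L[ℝ] EE n) :
    ContDiff ℝ 1 (fun t => (InnerProductSpace.toDual ℝ (Vec n)).symm
      ((fderiv ℝ (GG g) (PP q τ t)).comp ι)) := by
  have hdG : ContDiff ℝ 1 (fderiv ℝ (GG g)) := hG.fderiv_right (by norm_num)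
  have hι : ContDiff ℝ 1 (fun T : EE n →L[ℝ] ℝ => T.comp ι) :=
    ((ContinuousLinearMap.compL ℝ (Vec n) (EE n) ℝ).flip ι).contDiff
  exact ((InnerProductSpace.toDual ℝ (Vec n)).symm.contDiff.comp hι).comp
    (hdG.comp (PP_contDiff τ q hq))

lemma dL2_contDiff (hG : ContDiff ℝ 2 (GG g)) (hq : ContDiff ℝ 2 q) :
    ContDiff ℝ 1 (fun t => dL2 g τ q t) := by
  have h2 : (fun t => dL2 g τ q t) = fun t => (InnerProductSpace.toDual ℝ (Vec n)).symm
      ((fderiv ℝ (GG g) (PP q τ t)).comp (ι₂ n)) :=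
    funext (dL2_eq_s11 g τ q (hG.differentiable (by norm_num)))
  rw [h2]; exact comp_smooth g τ q hG hq _

lemma dL3_contDiff (hG : ContDiff ℝ 2 (GG g)) (hq : ContDiff ℝ 2 q) :
    ContDiff ℝ 1 (fun t => dL3 g τ q t) := by
  have h2 : (fun t => dL3 g τ q t) = fun t => (InnerProductSpace.toDual ℝ (Vec n)).symm
      ((fderiv ℝ (GG g) (PP q τ t)).comp (ι₃ n)) :=
    funext (dL3_eq_s11 g τ q (hG.differentiable (by norm_num)))
  rw [h2]; exact comp_smooth g τ q hG hq _

end gradientFormulas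

lemma deriv_zero_of_eqOn_zero {f : ℝ → Vec n} (hf : ContDiff ℝ 2 f) {a b : ℝ} (hab : a < b)
    (h0 : ∀ t ∈ Icc a b, f t = 0) : ∀ t ∈ Icc a b, deriv f t = 0 := by
  have hcont : Continuous (deriv f) := hf.continuous_deriv (by norm_num)
  have hIoo : ∀ t ∈ Ioo a b, deriv f t = 0 := by
    intro t htm
    have hev : f =ᶠ[nhds t] (fun _ => (0 : Vec n)) := by
      filter_upwards [Ioo_mem_nhds htm.1 htm.2] with s hs using h0 s (Ioo_subset_Icc_self hs)
    rw [hev.deriv_eq]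
    exact deriv_const t 0
  have hclos : EqOn (deriv f) (fun _ => (0 : Vec n)) (closure (Ioo a b)) :=
    Set.EqOn.closure (fun t htm => hIoo t htm) hcont continuous_const
  intro t htm
  exact hclos (by rwa [closure_Ioo hab.ne])

end FVaux

/-- first variation of the delayed functional `I^τ` for variations
vanishing on `[t₁-τ, t₁]` and on `[t₁, t₂-τ]`, with `h(t₂) = 0`. -/
theorem first_variation_with_time_delay_second_interval
    {n : ℕ} (hn : 0 < n) (t₁ t₂ τ : ℝ) (ht : t₁ < t₂) (hτ : 0 < τ)
    (hτ' : τ < t₂ - t₁) (g : Lag n) (hg : LagC2 g)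
    (q : ℝ → Vec n) (hq : ContDiff ℝ 2 q)
    (h : ℝ → Vec n) (hh : ContDiff ℝ 2 h)
    (hh₁ : ∀ t ∈ Icc (t₁ - τ) t₁, h t = 0)
    (hh₂ : ∀ t ∈ Icc t₁ (t₂ - τ), h t = 0)
    (hh₃ : h t₂ = 0) :
    HasDerivAt (fun ε : ℝ => ∫ t in t₁..t₂,
        g t (q t + ε • h t) (deriv q t + ε • deriv h t)
          (q (t - τ) + ε • h (t - τ)) (deriv q (t - τ) + ε • deriv h (t - τ)))
      (∫ t in (t₂ - τ)..t₂,
        ⟪dL2 g τ q t - deriv (fun s => dL3 g τ q s) t, h t⟫)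
      0 := by
  classical
  have ht₁τ : t₁ ≤ t₂ - τ := by linarith
  have ht₂τ : t₂ - τ ≤ t₂ := by linarith
  -- the Lagrangian on the total space
  have hG : ContDiff ℝ 2 (FVaux.GG g) := hg
  have hGd : Differentiable ℝ (FVaux.GG g) := hG.differentiable (by norm_num)
  have hGc : Continuous (FVaux.GG g) := hG.continuous
  -- trajectories
  set P : ℝ → FVaux.EE n := FVaux.PP q τ with hPdef
  set V : ℝ → FVaux.EE n :=
    fun t => ((0 : ℝ), h t, deriv h t, h (t - τ), deriv h (t - τ)) with hVdef
  have hPcd : ContDiff ℝ 1 P := FVaux.PP_contDiff τ q hq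
  have hh1c : ContDiff ℝ 1 h := hh.of_le (by norm_num)
  have hh' : ContDiff ℝ 1 (deriv h) := FVaux.deriv_contDiff hh
  have hshift : ContDiff ℝ 1 (fun t : ℝ => t - τ) := contDiff_id.sub contDiff_const
  have hVcd : ContDiff ℝ 1 V :=
    contDiff_const.prodMk (hh1c.prodMk (hh'.prodMk ((hh1c.comp hshift).prodMk (hh'.comp hshift))))
  have hPc : Continuous P := hPcd.continuous
  have hVc : Continuous V := hVcd.continuous
  have hhc : Continuous h := hh.continuous
  have hdh : Continuous (deriv h) := hh'.continuous
  have hhd : Differentiable ℝ h := hh.differentiable (by norm_num)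
  -- vanishing of `h` and `deriv h` on `[t₁ - τ, t₂ - τ]`
  have hzero : ∀ t ∈ Icc (t₁ - τ) (t₂ - τ), h t = 0 := by
    intro t htm
    rcases le_total t t₁ with hc | hc
    · exact hh₁ t ⟨htm.1, hc⟩
    · exact hh₂ t ⟨hc, htm.2⟩
  have hzero' : ∀ t ∈ Icc (t₁ - τ) (t₂ - τ), deriv h t = 0 :=
    FVaux.deriv_zero_of_eqOn_zero hh (by linarith) hzero
  -- continuity of `fderiv`
  have hfdc : Continuous (fderiv ℝ (FVaux.GG g)) := (hG.fderiv_right (m := 1) (by norm_num)).continuous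
  -- uniform bounds on a compact set
  set Φ : ℝ × ℝ → FVaux.EE n := fun p => P p.1 + p.2 • V p.1 with hΦdef
  have hΦc : Continuous Φ :=
    (hPc.comp continuous_fst).add (continuous_snd.smul (hVc.comp continuous_fst))
  have hKcpt : IsCompact (Φ '' ((uIcc t₁ t₂) ×ˢ Icc (-1 : ℝ) 1)) :=
    ((isCompact_uIcc).prod isCompact_Icc).image hΦc
  obtain ⟨C, hC⟩ := hKcpt.exists_bound_of_continuousOn hfdc.continuousOn
  obtain ⟨M, hM⟩ := (isCompact_uIcc (a := t₁) (b := t₂)).exists_bound_of_continuousOn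
    hVc.continuousOn
  have hM0 : 0 ≤ M := le_trans (norm_nonneg _) (hM t₁ left_mem_uIcc)
  have hC0 : 0 ≤ C :=
    le_trans (norm_nonneg (fderiv ℝ (FVaux.GG g) (Φ (t₁, 0))))
      (hC (Φ (t₁, 0)) (Set.mem_image_of_mem Φ
        (Set.mk_mem_prod left_mem_uIcc ⟨by norm_num, by norm_num⟩)))
  -- differentiation under the integral sign
  have main := intervalIntegral.hasDerivAt_integral_of_dominated_loc_of_deriv_le
    (μ := volume) (F := fun ε t => FVaux.GG g (P t + ε • V t))
    (F' := fun ε t => fderiv ℝ (FVaux.GG g) (P t + ε • V t) (V t))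
    (x₀ := (0 : ℝ)) (a := t₁) (b := t₂) (bound := fun _ => C * M) (s := Metric.ball 0 1) (Metric.ball_mem_nhds 0 one_pos)
    (Filter.Eventually.of_forall fun x =>
      (Continuous.aestronglyMeasurable (f := fun t => FVaux.GG g (P t + x • V t))
        (hGc.comp (hPc.add ((continuous_const (y := x)).smul hVc)))))
    (Continuous.intervalIntegrable (u := fun t => FVaux.GG g (P t + (0 : ℝ) • V t))
      (hGc.comp (hPc.add ((continuous_const (y := (0 : ℝ))).smul hVc))) t₁ t₂)
    (Continuous.aestronglyMeasurable
      (f := fun t => fderiv ℝ (FVaux.GG g) (P t + (0 : ℝ) • V t) (V t))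
      ((hfdc.comp (hPc.add ((continuous_const (y := (0 : ℝ))).smul hVc))).clm_apply hVc))
    (Filter.Eventually.of_forall fun t => by
      intro htm x hx
      have htI : t ∈ uIcc t₁ t₂ := Set.Ioc_subset_Icc_self htm
      have hxI : x ∈ Icc (-1 : ℝ) 1 := by
        have := mem_ball_iff_norm.mp hx
        rw [sub_zero] at this
        exact abs_le.mp (le_of_lt this)
      have hmem : P t + x • V t ∈ Φ '' ((uIcc t₁ t₂) ×ˢ Icc (-1 : ℝ) 1) :=
        Set.mem_image_of_mem Φ (Set.mk_mem_prod htI hxI)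
      calc ‖fderiv ℝ (FVaux.GG g) (P t + x • V t) (V t)‖
          ≤ ‖fderiv ℝ (FVaux.GG g) (P t + x • V t)‖ * ‖V t‖ :=
            ContinuousLinearMap.le_opNorm _ _
        _ ≤ C * M := mul_le_mul (hC _ hmem) (hM t htI) (norm_nonneg _) hC0)
    (intervalIntegrable_const)
    (Filter.Eventually.of_forall fun t => by
      intro htm x hx
      have hc : HasDerivAt (fun ε : ℝ => P t + ε • V t) (V t) x := by
        simpa using ((hasDerivAt_id x).smul_const (V t)).const_add (P t)
      exact (hGd (P t + x • V t)).hasFDerivAt.comp_hasDerivAt x hc)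
  -- inner product formulas for the partial gradients
  have hinner2 : ∀ (t : ℝ) (v : Vec n),
      ⟪dL2 g τ q t, v⟫ = fderiv ℝ (FVaux.GG g) (P t) (FVaux.ι₂ n v) := by
    intro t v
    rw [FVaux.dL2_eq_s11 g τ q hGd t, InnerProductSpace.toDual_symm_apply]
    rfl
  have hinner3 : ∀ (t : ℝ) (v : Vec n),
      ⟪dL3 g τ q t, v⟫ = fderiv ℝ (FVaux.GG g) (P t) (FVaux.ι₃ n v) := by
    intro t v
    rw [FVaux.dL3_eq_s11 g τ q hGd t, InnerProductSpace.toDual_symm_apply]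
    rfl
  have hinner4 : ∀ (t : ℝ) (v : Vec n),
      ⟪dL4 g τ q t, v⟫ = fderiv ℝ (FVaux.GG g) (P t) (FVaux.ι₄ n v) := by
    intro t v
    rw [FVaux.dL4_eq_s11 g τ q hGd t, InnerProductSpace.toDual_symm_apply]
    rfl
  have hinner5 : ∀ (t : ℝ) (v : Vec n),
      ⟪dL5 g τ q t, v⟫ = fderiv ℝ (FVaux.GG g) (P t) (FVaux.ι₅ n v) := by
    intro t v
    rw [FVaux.dL5_eq_s11 g τ q hGd t, InnerProductSpace.toDual_symm_apply]
    rfl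
  -- pointwise decomposition of the integrand of the derivative
  have hpt : ∀ t : ℝ, fderiv ℝ (FVaux.GG g) (P t) (V t)
      = ⟪dL2 g τ q t, h t⟫ + ⟪dL3 g τ q t, deriv h t⟫
        + ⟪dL4 g τ q t, h (t - τ)⟫ + ⟪dL5 g τ q t, deriv h (t - τ)⟫ := by
    intro t
    have hdecomp : V t = FVaux.ι₂ n (h t) + FVaux.ι₃ n (deriv h t)
        + FVaux.ι₄ n (h (t - τ)) + FVaux.ι₅ n (deriv h (t - τ)) := by
      simp only [hVdef, FVaux.ι₂_apply, FVaux.ι₃_apply, FVaux.ι₄_apply, FVaux.ι₅_apply,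
        Prod.mk_add_mk]
      simp
    rw [hdecomp, map_add, map_add, map_add, hinner2, hinner3, hinner4, hinner5]
  -- regularity of `dL2` and `dL3` along the trajectory
  have hA_cd : ContDiff ℝ 1 (fun s => dL3 g τ q s) := FVaux.dL3_contDiff g τ q hG hq
  have hAc : Continuous (fun s => dL3 g τ q s) := hA_cd.continuous
  have hA'c : Continuous (deriv (fun s => dL3 g τ q s)) := (contDiff_one_iff_deriv.mp hA_cd).2
  have hAd : Differentiable ℝ (fun s => dL3 g τ q s) := hA_cd.differentiable one_ne_zero
  have hBc : Continuous (fun s => dL2 g τ q s) := (FVaux.dL2_contDiff g τ q hG hq).continuous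
  -- the integrand restricted to `[t₁, t₂]`
  have hu_cont : Continuous (fun t => ⟪dL2 g τ q t, h t⟫ + ⟪dL3 g τ q t, deriv h t⟫) :=
    (hBc.inner hhc).add (hAc.inner hdh)
  have hcongr1 : (∫ t in t₁..t₂, fderiv ℝ (FVaux.GG g) (P t) (V t))
      = ∫ t in t₁..t₂, (⟪dL2 g τ q t, h t⟫ + ⟪dL3 g τ q t, deriv h t⟫) := by
    apply intervalIntegral.integral_congr
    intro t htm
    rw [uIcc_of_le ht.le] at htm
    have h4 : h (t - τ) = 0 := hzero _ ⟨by linarith [htm.1], by linarith [htm.2]⟩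
    have h5 : deriv h (t - τ) = 0 := hzero' _ ⟨by linarith [htm.1], by linarith [htm.2]⟩
    simp only [hpt t, h4, h5, inner_zero_right, add_zero]
  -- the integral over `[t₁, t₂ - τ]` vanishes
  have hfirst : (∫ t in t₁..(t₂ - τ), (⟪dL2 g τ q t, h t⟫ + ⟪dL3 g τ q t, deriv h t⟫)) = 0 := by
    have : (∫ t in t₁..(t₂ - τ), (⟪dL2 g τ q t, h t⟫ + ⟪dL3 g τ q t, deriv h t⟫))
        = ∫ t in t₁..(t₂ - τ), (0 : ℝ) := by
      apply intervalIntegral.integral_congr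
      intro t htm
      rw [uIcc_of_le ht₁τ] at htm
      have h4 : h t = 0 := hh₂ t htm
      have h5 : deriv h t = 0 := hzero' t ⟨by linarith [htm.1], htm.2⟩
      simp [h4, h5]
    rw [this, intervalIntegral.integral_zero]
  -- splitting the integral
  have hsplit : (∫ t in t₁..(t₂ - τ), (⟪dL2 g τ q t, h t⟫ + ⟪dL3 g τ q t, deriv h t⟫))
        + (∫ t in (t₂ - τ)..t₂, (⟪dL2 g τ q t, h t⟫ + ⟪dL3 g τ q t, deriv h t⟫))
      = ∫ t in t₁..t₂, (⟪dL2 g τ q t, h t⟫ + ⟪dL3 g τ q t, deriv h t⟫) :=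
    intervalIntegral.integral_add_adjacent_intervals
      (hu_cont.intervalIntegrable t₁ (t₂ - τ)) (hu_cont.intervalIntegrable (t₂ - τ) t₂)
  -- integration by parts on `[t₂ - τ, t₂]`
  have hibp : (∫ t in (t₂ - τ)..t₂,
        (⟪deriv (fun s => dL3 g τ q s) t, h t⟫ + ⟪dL3 g τ q t, deriv h t⟫))
      = ⟪dL3 g τ q t₂, h t₂⟫ - ⟪dL3 g τ q (t₂ - τ), h (t₂ - τ)⟫ := by
    apply intervalIntegral.integral_eq_sub_of_hasDerivAt
    · intro t htm
      have h1 := (hAd t).hasDerivAt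
      have h2 := (hhd t).hasDerivAt
      have h3 := HasDerivAt.inner ℝ h1 h2
      rw [add_comm]
      exact h3
    · exact ((hA'c.inner hhc).add (hAc.inner hdh)).intervalIntegrable _ _
  have hbd : ⟪dL3 g τ q t₂, h t₂⟫ - ⟪dL3 g τ q (t₂ - τ), h (t₂ - τ)⟫ = 0 := by
    rw [hh₃, hh₂ (t₂ - τ) ⟨ht₁τ, le_refl _⟩]
    simp
  have hAint : IntervalIntegrable (fun t => ⟪deriv (fun s => dL3 g τ q s) t, h t⟫)
      volume (t₂ - τ) t₂ := (hA'c.inner hhc).intervalIntegrable _ _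
  have hBint : IntervalIntegrable (fun t => ⟪dL2 g τ q t, h t⟫) volume (t₂ - τ) t₂ :=
    (hBc.inner hhc).intervalIntegrable _ _
  have hA3int : IntervalIntegrable (fun t => ⟪dL3 g τ q t, deriv h t⟫) volume (t₂ - τ) t₂ :=
    (hAc.inner hdh).intervalIntegrable _ _
  have hsecond : (∫ t in (t₂ - τ)..t₂, ⟪dL3 g τ q t, deriv h t⟫)
      = - ∫ t in (t₂ - τ)..t₂, ⟪deriv (fun s => dL3 g τ q s) t, h t⟫ := by
    have hadd := intervalIntegral.integral_add hAint hA3int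
    rw [hadd] at hibp
    rw [hbd] at hibp
    linarith
  -- identification of the value of the derivative
  have htarget : (∫ t in t₁..t₂, fderiv ℝ (FVaux.GG g) (P t) (V t))
      = ∫ t in (t₂ - τ)..t₂, ⟪dL2 g τ q t - deriv (fun s => dL3 g τ q s) t, h t⟫ := by
    rw [hcongr1, ← hsplit, hfirst, zero_add]
    rw [intervalIntegral.integral_add hBint hA3int, hsecond]
    have : (∫ t in (t₂ - τ)..t₂, ⟪dL2 g τ q t - deriv (fun s => dL3 g τ q s) t, h t⟫)
        = ∫ t in (t₂ - τ)..t₂,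
            (⟪dL2 g τ q t, h t⟫ - ⟪deriv (fun s => dL3 g τ q s) t, h t⟫) := by
      apply intervalIntegral.integral_congr
      intro t _
      simp only [inner_sub_left]
    rw [this, intervalIntegral.integral_sub hBint hAint]
    ring
  -- translate the statement of `main` into the goal
  have hfun : (fun ε : ℝ => ∫ t in t₁..t₂, FVaux.GG g (P t + ε • V t))
      = fun ε : ℝ => ∫ t in t₁..t₂,
          g t (q t + ε • h t) (deriv q t + ε • deriv h t)
            (q (t - τ) + ε • h (t - τ)) (deriv q (t - τ) + ε • deriv h (t - τ)) := by
    funext ε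
    congr 1
    funext t
    simp [hPdef, hVdef, FVaux.GG, FVaux.PP, Prod.mk_add_mk, Prod.smul_mk]
  rw [← hfun, ← htarget]
  have hmain := main.2
  simpa using hmain

end
end
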